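/- arXiv:2310.20179 — 7 statements merged into one kernel-verified Lean document; each statement's English description precedes it below -/
import Mathlib

section
/- Let s ≥ 1 be an integer, q = 2^s, m ≥ 3 an odd integer, and n = q^m − 1. Then for every integer i with 1 ≤ i ≤ n−1, i ∈ T_{(q,m;0)} if and only if n−i ∈ T_{(q,m;1)} (so −T_{(q,m;0)} = T_{(q,m;1)} modulo n), and |T_{(q,m;0)}| = |T_{(q,m;1)}| = (n−1)/2. -/
/-- The `q`-weight of a nonnegative integer: the sum of its base-`q` digits. -/
def qWeight (q i : ℕ) : ℕ := (Nat.digits q i).sum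


lemma qWeight_step {q : ℕ} (hq : 2 ≤ q) (a b : ℕ) (hb : b < q) :
    qWeight q (q * a + b) = qWeight q a + b := by
  rcases Nat.eq_zero_or_pos (q * a + b) with h | h
  · have hb0 : b = 0 := by omega
    have ha0 : a = 0 := by
      rcases Nat.eq_zero_or_pos a with h' | h'
      · exact h'
      · nlinarith
    simp [ha0, hb0, qWeight]
  · unfold qWeight
    rw [Nat.digits_def' (by omega : 1 < q) h]
    have h1 : (q * a + b) % q = b := by
      rw [Nat.mul_add_mod]; exact Nat.mod_eq_of_lt hb
    have h2 : (q * a + b) / q = a := by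
      rw [Nat.mul_add_div (by omega)]
      rw [Nat.div_eq_of_lt hb]
      omega
    rw [h1, h2]
    simp
    ring

lemma qWeight_compl {q : ℕ} (hq : 2 ≤ q) :
    ∀ m i, i ≤ q ^ m - 1 → qWeight q i + qWeight q (q ^ m - 1 - i) = m * (q - 1) := by
  intro m
  induction m with
  | zero =>
    intro i hi
    simp at hi
    simp [hi, qWeight]
  | succ m ih =>
    intro i hi
    have hq1 : 1 ≤ q ^ m := Nat.one_le_pow _ _ (by omega)
    have hb : i % q < q := Nat.mod_lt _ (by omega)
    have hiab : q * (i / q) + i % q = i := Nat.div_add_mod i q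
    have ha' : i / q < q ^ m := by
      have hpow : q ^ (m + 1) = q ^ m * q := pow_succ q m
      have hilt : i < q ^ m * q := by
        have : 1 ≤ q ^ (m+1) := Nat.one_le_pow _ _ (by omega)
        omega
      exact (Nat.div_lt_iff_lt_mul (by omega)).mpr hilt
    obtain ⟨c, hc⟩ : ∃ c, q ^ m = i / q + c + 1 := ⟨q ^ m - (i / q) - 1, by omega⟩
    have hcc : q ^ m - 1 - i / q = c := by omega
    have e1 : q ^ (m + 1) = q * (i / q) + q * c + q := by
      rw [pow_succ, hc]; ring
    have key : q ^ (m + 1) - 1 - i = q * c + (q - 1 - i % q) := by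
      set A := q * (i / q)
      set C := q * c
      omega
    have w1 : qWeight q i = qWeight q (i / q) + i % q := by
      have := qWeight_step hq (i / q) (i % q) hb
      rw [hiab] at this
      exact this
    have w2 : qWeight q (q ^ (m + 1) - 1 - i) = qWeight q c + (q - 1 - i % q) := by
      rw [key]
      exact qWeight_step hq _ _ (by omega)
    have ihm := ih (i / q) (by omega)
    rw [hcc] at ihm
    have hmul : (m + 1) * (q - 1) = m * (q - 1) + (q - 1) := by ring
    omega

/-- The set `T_{(q,m;j)} = {i : 1 ≤ i ≤ q^m − 2, wt_q(i) ≡ j (mod 2)}` as a finset. -/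
def Tset (q m j : ℕ) : Finset ℕ :=
  (Finset.Icc 1 (q ^ m - 2)).filter fun i => qWeight q i % 2 = j

theorem stmt0 (s q m n : ℕ) (hs : 1 ≤ s) (hq : q = 2 ^ s)
    (hm : 3 ≤ m) (hmodd : Odd m) (hn : n = q ^ m - 1) :
    (∀ i : ℕ, 1 ≤ i → i ≤ n - 1 → (i ∈ Tset q m 0 ↔ n - i ∈ Tset q m 1)) ∧
      (Tset q m 0).card = (n - 1) / 2 ∧ (Tset q m 1).card = (n - 1) / 2 := by
  have hq2 : 2 ≤ q := by
    rw [hq]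
    calc 2 = 2 ^ 1 := by norm_num
    _ ≤ 2 ^ s := Nat.pow_le_pow_right (by norm_num) hs
  have hqm : 8 ≤ q ^ m := by
    calc 8 = 2 ^ 3 := by norm_num
    _ ≤ q ^ 3 := Nat.pow_le_pow_left hq2 3
    _ ≤ q ^ m := Nat.pow_le_pow_right (by omega) hm
  have hqeven : Even q := by
    rw [hq]
    exact (Nat.even_pow' (by omega)).mpr even_two
  have hqmeven : Even (q ^ m) := (Nat.even_pow).mpr ⟨hqeven, by omega⟩
  have hodd : Odd (m * (q - 1)) := by
    refine hmodd.mul ?_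
    obtain ⟨k, hk⟩ := hqeven
    exact ⟨k - 1, by omega⟩
  obtain ⟨K, hK⟩ := hodd
  -- the main equivalence
  have main : ∀ i : ℕ, 1 ≤ i → i ≤ n - 1 → (i ∈ Tset q m 0 ↔ n - i ∈ Tset q m 1) := by
    intro i h1 h2
    have hc := qWeight_compl hq2 m i (by omega)
    rw [← hn] at hc
    simp only [Tset, Finset.mem_filter, Finset.mem_Icc]
    constructor
    · rintro ⟨⟨-, -⟩, hw⟩
      exact ⟨⟨by omega, by omega⟩, by omega⟩
    · rintro ⟨-, hw⟩
      exact ⟨⟨by omega, by omega⟩, by omega⟩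
  refine ⟨main, ?_⟩
  -- the two sets have equal cardinality
  have hmem : ∀ i j, i ∈ Tset q m j → 1 ≤ i ∧ i ≤ n - 1 := by
    intro i j hi
    simp only [Tset, Finset.mem_filter, Finset.mem_Icc] at hi
    omega
  have hcard : (Tset q m 0).card = (Tset q m 1).card := by
    apply Finset.card_nbij' (fun i => n - i) (fun i => n - i)
    · intro i hi
      obtain ⟨ha, hb⟩ := hmem i 0 hi
      exact (main i ha hb).mp hi
    · intro j hj
      obtain ⟨ha, hb⟩ := hmem j 1 hj
      have hc := qWeight_compl hq2 m j (by omega)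
      rw [← hn] at hc
      simp only [Tset, Finset.mem_coe, Finset.mem_filter, Finset.mem_Icc] at hj ⊢
      exact ⟨⟨by omega, by omega⟩, by omega⟩
    · intro i hi
      obtain ⟨ha, hb⟩ := hmem i 0 hi
      beta_reduce
      omega
    · intro j hj
      obtain ⟨ha, hb⟩ := hmem j 1 hj
      beta_reduce
      omega
  -- total count
  have hsplit := Finset.card_filter_add_card_filter_not
    (s := Finset.Icc 1 (q ^ m - 2)) (p := fun i => qWeight q i % 2 = 0)
  have hT1 : (Tset q m 1).card =
      ((Finset.Icc 1 (q ^ m - 2)).filter fun i => ¬ qWeight q i % 2 = 0).card := by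
    congr 1
    apply Finset.filter_congr
    intro i _
    omega
  have hIcc : (Finset.Icc 1 (q ^ m - 2)).card = q ^ m - 2 := by
    rw [Nat.card_Icc]
    omega
  have h01 : (Tset q m 0).card + (Tset q m 1).card = n - 1 := by
    rw [hT1]
    show ((Finset.Icc 1 (q ^ m - 2)).filter fun i => qWeight q i % 2 = 0).card + _ = _
    rw [hsplit, hIcc]
    omega
  obtain ⟨K2, hK2⟩ := hqmeven
  constructor <;> omega
end

section
/- Let s ≥ 1 be an integer and q = 2^s. Let m ≥ 2 and let ℓ be a positive integer such that m/gcd(ℓ, m) is odd. Then gcd(q^m − 1, q^ℓ + 1) = 1. -/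
theorem stmt2 (s q m ℓ : ℕ) (hs : 1 ≤ s) (hq : q = 2 ^ s)
    (hm : 2 ≤ m) (hℓ : 1 ≤ ℓ) (hodd : Odd (m / Nat.gcd ℓ m)) :
    Nat.gcd (q ^ m - 1) (q ^ ℓ + 1) = 1 := by
  set g := Nat.gcd ℓ m with hgdef
  have hgpos : 0 < g := Nat.gcd_pos_of_pos_left m hℓ
  have hgl : g ∣ ℓ := Nat.gcd_dvd_left ℓ m
  have hgm : g ∣ m := Nat.gcd_dvd_right ℓ m
  -- gcd (2ℓ) m = g
  have hkey : Nat.gcd (2 * ℓ) m = g := by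
    have hl : ℓ = g * (ℓ / g) := (Nat.mul_div_cancel' hgl).symm
    have hmm : m = g * (m / g) := (Nat.mul_div_cancel' hgm).symm
    have hcop : Nat.Coprime (ℓ / g) (m / g) := Nat.coprime_div_gcd_div_gcd hgpos
    have hcop2 : Nat.Coprime 2 (m / g) := by
      exact Nat.coprime_two_left.mpr hodd
    have hcop' : Nat.Coprime (2 * (ℓ / g)) (m / g) := Nat.Coprime.mul hcop2 hcop
    calc Nat.gcd (2 * ℓ) m = Nat.gcd (g * (2 * (ℓ / g))) (g * (m / g)) := by
              rw [← hmm, mul_left_comm, ← hl]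
      _ = g * Nat.gcd (2 * (ℓ / g)) (m / g) := Nat.gcd_mul_left _ _ _
      _ = g := by rw [hcop', Nat.mul_one]
  have hq2 : 2 ≤ q := by
    rw [hq]; calc 2 = 2 ^ 1 := by norm_num
      _ ≤ 2 ^ s := Nat.pow_le_pow_right (by norm_num) hs
  set D := Nat.gcd (q ^ m - 1) (q ^ ℓ + 1) with hDdef
  have hD1 : D ∣ q ^ m - 1 := Nat.gcd_dvd_left _ _
  have hD2 : D ∣ q ^ ℓ + 1 := Nat.gcd_dvd_right _ _
  have hqm1 : 1 ≤ q ^ m := Nat.one_le_pow _ _ (by omega)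
  -- pass to ZMod D
  have hcast1 : (q : ZMod D) ^ m = 1 := by
    have : ((q ^ m - 1 : ℕ) : ZMod D) = 0 := (ZMod.natCast_eq_zero_iff _ _).mpr hD1
    rw [Nat.cast_sub hqm1] at this
    push_cast at this
    linear_combination this
  have hcast2 : (q : ZMod D) ^ ℓ = -1 := by
    have : ((q ^ ℓ + 1 : ℕ) : ZMod D) = 0 := (ZMod.natCast_eq_zero_iff _ _).mpr hD2
    push_cast at this
    linear_combination this
  have hord1 : orderOf (q : ZMod D) ∣ m := orderOf_dvd_of_pow_eq_one hcast1
  have hord2 : orderOf (q : ZMod D) ∣ 2 * ℓ := by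
    apply orderOf_dvd_of_pow_eq_one
    rw [pow_mul', hcast2]
    ring
  have hordg : orderOf (q : ZMod D) ∣ g := by
    rw [← hkey]
    exact Nat.dvd_gcd hord2 hord1
  have hql : (q : ZMod D) ^ ℓ = 1 :=
    orderOf_dvd_iff_pow_eq_one.mp (hordg.trans hgl)
  have h2 : ((2 : ℕ) : ZMod D) = 0 := by
    push_cast
    linear_combination hcast2 - hql
  have hDdvd2 : D ∣ 2 := (ZMod.natCast_eq_zero_iff _ _).mp h2
  -- D is odd since q^m - 1 is odd
  have hoddqm : Odd (q ^ m - 1) := by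
    have heven : Even (q ^ m) := by
      rw [hq, ← pow_mul]
      exact (Nat.even_pow' (by positivity)).mpr even_two
    rcases heven with ⟨k, hk⟩
    refine ⟨k - 1, ?_⟩
    omega
  rcases (Nat.dvd_prime Nat.prime_two).mp hDdvd2 with h | h
  · exact h
  · exfalso
    have h2d : (2 : ℕ) ∣ q ^ m - 1 := h ▸ hD1
    rcases hoddqm with ⟨k, hk⟩
    omega
end

section
/- Let s ≥ 2 be an integer, q = 2^s, m ≥ 3 an odd integer, and n = q^m − 1. Let b = 2q^{m−1} and a = q^{(m−1)/2} + 1. Then gcd(a, n) = 1, and for every integer i with −(q−1) ≤ i ≤ q^{(m−1)/2} + q − 2, the residue (b + a·i) mod n belongs to T_{(q,m;0)}. -/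
lemma sum_digits_split (q : ℕ) (hq : 2 ≤ q) :
    ∀ (n x y : ℕ), x < q ^ n →
    (Nat.digits q (x + q ^ n * y)).sum = (Nat.digits q x).sum + (Nat.digits q y).sum := by
  intro n
  induction n with
  | zero =>
    intro x y hx
    have hx0 : x = 0 := by simpa using hx
    subst hx0
    simp
  | succ n ih =>
    intro x y hx
    rcases Nat.eq_zero_or_pos y with rfl | hy
    · simp
    · have hq0 : 0 < q := by omega
      have hN : 0 < x + q ^ (n+1) * y := by positivity
      have hre : x + q ^ (n+1) * y = x + q * (q ^ n * y) := by ring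
      rw [hre, Nat.digits_def' (by omega : 1 < q) (by rw [← hre]; exact hN)]
      have h1 : (x + q * (q ^ n * y)) % q = x % q := Nat.add_mul_mod_self_left x q _
      have h2 : (x + q * (q ^ n * y)) / q = x / q + q ^ n * y :=
        Nat.add_mul_div_left x _ hq0
      have hxq : x / q < q ^ n := by
        rw [Nat.div_lt_iff_lt_mul hq0]
        calc x < q ^ (n+1) := hx
        _ = q ^ n * q := by ring
      rw [List.sum_cons, h1, h2, ih (x / q) y hxq]
      rcases Nat.eq_zero_or_pos x with rfl | hx0
      · simp
      · rw [Nat.digits_def' (by omega : 1 < q) hx0]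
        simp [List.sum_cons]
        omega

lemma wt_lt (q x : ℕ) (hq : 2 ≤ q) (hx : x < q) : (Nat.digits q x).sum = x := by
  rcases Nat.eq_zero_or_pos x with rfl | hx0
  · simp
  · rw [Nat.digits_def' (by omega : 1 < q) hx0, Nat.div_eq_of_lt hx, Nat.mod_eq_of_lt hx]
    simp

lemma wt_pow_sub (q : ℕ) (hq : 2 ≤ q) :
    ∀ t, 1 ≤ t → ∀ j, 1 ≤ j → j ≤ q →
    (Nat.digits q (q ^ t - j)).sum = (q - j) + (t - 1) * (q - 1) := by
  intro t
  induction t with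
  | zero => omega
  | succ t ih =>
    intro _ j hj1 hjq
    rcases Nat.eq_zero_or_pos t with rfl | ht
    · have h1 : q ^ (0 + 1) = q := by ring
      rw [h1, wt_lt q (q - j) hq (by omega)]
      simp
    · have hqt : q ≤ q ^ t := Nat.le_self_pow (by omega) q
      have hsplit : q ^ (t+1) - j = (q - j) + q ^ 1 * (q ^ t - 1) := by
        have h1 : q ^ (t+1) = q * q ^ t := by ring
        have h2 : q ^ 1 * (q ^ t - 1) = q * q ^ t - q := by
          rw [pow_one, Nat.mul_sub, mul_one]
        have h5 : q ≤ q * q ^ t := le_trans hqt (Nat.le_mul_of_pos_left _ (by omega))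
        omega
      rw [hsplit, sum_digits_split q hq 1 (q - j) (q ^ t - 1) (by rw [pow_one]; omega),
        ih ht 1 le_rfl (by omega), wt_lt q (q - j) hq (by omega)]
      have h3 : (t + 1 - 1) * (q - 1) = (q - 1) + (t - 1) * (q - 1) := by
        have h4 : t + 1 - 1 = 1 + (t - 1) := by omega
        rw [h4, add_mul, one_mul]
      rw [h3]

theorem stmt4 (s q m n : ℕ) (hs : 2 ≤ s) (hq : q = 2 ^ s)
    (hm : 3 ≤ m) (hmodd : Odd m) (hn : n = q ^ m - 1)
    (b a : ℤ) (hb : b = 2 * (q : ℤ) ^ (m - 1)) (ha : a = (q : ℤ) ^ ((m - 1) / 2) + 1) :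
    Int.gcd a (n : ℤ) = 1 ∧
      ∀ i : ℤ, -((q : ℤ) - 1) ≤ i → i ≤ (q : ℤ) ^ ((m - 1) / 2) + (q : ℤ) - 2 →
        ((b + a * i) % (n : ℤ)).toNat ∈ Tset q m 0 := by
  obtain ⟨t, ht⟩ := hmodd
  have ht1 : 1 ≤ t := by omega
  have hmt : (m - 1) / 2 = t := by omega
  have hm1 : m - 1 = 2 * t := by omega
  have hq4 : 4 ≤ q := by
    rw [hq]
    calc (4:ℕ) = 2 ^ 2 := rfl
    _ ≤ 2 ^ s := Nat.pow_le_pow_right (by omega) hs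
  have hq2 : 2 ≤ q := by omega
  have hqt : q ≤ q ^ t := Nat.le_self_pow (by omega) q
  have hqm1 : 1 ≤ q ^ m := Nat.one_le_pow _ _ (by omega)
  have hq4' : (4:ℤ) ≤ (q:ℤ) := by exact_mod_cast hq4
  have hqQ : (q:ℤ) ≤ (q:ℤ) ^ t := by exact_mod_cast hqt
  have hca : a = (q:ℤ) ^ t + 1 := by rw [ha, hmt]
  have hcb : b = 2 * (q:ℤ) ^ t * (q:ℤ) ^ t := by rw [hb, hm1]; ring
  have hn' : (n:ℤ) = (q:ℤ) * (q:ℤ) ^ t * (q:ℤ) ^ t - 1 := by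
    rw [hn]
    push_cast [hqm1]
    rw [ht]
    ring
  constructor
  · set g := Int.gcd a (n:ℤ) with hg
    have hga : (g:ℤ) ∣ a := Int.gcd_dvd_left _ _
    have hgn : (g:ℤ) ∣ (n:ℤ) := Int.gcd_dvd_right _ _
    have h1 : (g:ℤ) ∣ (q:ℤ) ^ t * (q:ℤ) ^ t - 1 := by
      refine hga.trans ?_
      rw [hca]
      exact ⟨(q:ℤ) ^ t - 1, by ring⟩
    have h3 : (g:ℤ) ∣ (q:ℤ) - 1 := by
      have hd : (g:ℤ) ∣ (q:ℤ) * ((q:ℤ) ^ t * (q:ℤ) ^ t - 1) - (n:ℤ) :=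
        dvd_sub (h1.mul_left _) hgn
      have he : (q:ℤ) * ((q:ℤ) ^ t * (q:ℤ) ^ t - 1) - (n:ℤ) = -((q:ℤ) - 1) := by
        rw [hn']; ring
      rw [he, dvd_neg] at hd
      exact hd
    have h4 : (q:ℤ) - 1 ∣ (q:ℤ) ^ t - 1 := by
      have := sub_dvd_pow_sub_pow (q:ℤ) 1 t
      simpa using this
    have h5 : (g:ℤ) ∣ 2 := by
      have hd := dvd_sub hga (h3.trans h4)
      rw [hca] at hd
      have he : (q:ℤ) ^ t + 1 - ((q:ℤ) ^ t - 1) = 2 := by ring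
      rwa [he] at hd
    have h6 : g ∣ 2 := by exact_mod_cast h5
    have hgn2 : g ∣ n := by exact_mod_cast hgn
    have h2qm : 2 ∣ q ^ m := (by rw [hq]; exact dvd_pow_self 2 (by omega) : 2 ∣ q).trans
      (dvd_pow_self q (by omega))
    rcases (Nat.dvd_prime Nat.prime_two).mp h6 with h | h
    · exact h
    · exfalso
      rw [h] at hgn2
      omega
  · intro i hi1 hi2
    rw [hmt] at hi2
    set v : ℤ := b + a * i with hv
    have hvQ : v = 2 * (q:ℤ) ^ t * (q:ℤ) ^ t + ((q:ℤ) ^ t + 1) * i := by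
      rw [hv, hca, hcb]
    have hv1 : 1 ≤ v := by
      rw [hvQ]
      nlinarith [mul_le_mul_of_nonneg_left hi1 (show (0:ℤ) ≤ (q:ℤ) ^ t + 1 by positivity),
        mul_le_mul_of_nonneg_left (show (q:ℤ) - 1 ≤ (q:ℤ) ^ t - 1 by linarith)
          (show (0:ℤ) ≤ (q:ℤ) ^ t + 1 by positivity), hqQ, hq4']
    have hvn : v < (n:ℤ) := by
      rw [hvQ, hn']
      nlinarith [mul_le_mul_of_nonneg_left hi2 (show (0:ℤ) ≤ (q:ℤ) ^ t + 1 by positivity),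
        mul_nonneg (show (0:ℤ) ≤ (q:ℤ) ^ t - q by linarith)
          (show (0:ℤ) ≤ (q:ℤ) ^ t + 1 by positivity),
        mul_nonneg (mul_nonneg (show (0:ℤ) ≤ (q:ℤ) - 4 by linarith)
          (show (0:ℤ) ≤ (q:ℤ) ^ t by positivity)) (show (0:ℤ) ≤ (q:ℤ) ^ t by positivity),
        hqQ, hq4']
    have hmod : v % (n:ℤ) = v := Int.emod_eq_of_lt (by omega) hvn
    rw [hmod]
    rw [Tset, Finset.mem_filter, Finset.mem_Icc]; simp only [qWeight]
    refine ⟨⟨by omega, by omega⟩, ?_⟩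
    rcases lt_or_ge i 0 with hineg | hipos
    · -- i < 0 : j = -i, 1 ≤ j ≤ q - 1
      set j : ℕ := (-i).toNat with hj
      have hj1 : 1 ≤ j := by omega
      have hjq : j ≤ q - 1 := by omega
      have hiv : i = -(j:ℤ) := by omega
      have h1 : j ≤ q ^ t := by omega
      have h2 : j + 1 ≤ q ^ t := by omega
      have hkeyZ : v = ((q ^ t - j) + q ^ t * ((q ^ t - (j+1)) + q ^ t * 1) : ℕ) := by
        push_cast [h1, h2]
        rw [hvQ, hiv]
        ring
      have hkey : v.toNat = (q ^ t - j) + q ^ t * ((q ^ t - (j+1)) + q ^ t * 1) := by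
        rw [hkeyZ, Int.toNat_natCast]
      rw [hkey, sum_digits_split q hq2 t _ _ (by omega),
        sum_digits_split q hq2 t _ _ (by omega),
        wt_pow_sub q hq2 t ht1 j (by omega) (by omega),
        wt_pow_sub q hq2 t ht1 (j+1) (by omega) (by omega),
        wt_lt q 1 hq2 (by omega)]
      generalize (t - 1) * (q - 1) = c
      omega
    · rcases lt_or_ge i ((q:ℤ) ^ t) with hilt | hige
      · -- 0 ≤ i < q^t
        set u : ℕ := i.toNat with hu
        have hui : (u:ℤ) = i := by omega
        have huq : u < q ^ t := by
          have : (u:ℤ) < (q:ℤ) ^ t := by omega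
          exact_mod_cast this
        have hkeyZ : v = ((u + q ^ t * u) + q ^ (2*t) * 2 : ℕ) := by
          push_cast
          rw [hvQ, ← hui]
          ring
        have hkey : v.toNat = (u + q ^ t * u) + q ^ (2*t) * 2 := by
          rw [hkeyZ, Int.toNat_natCast]
        have hub : u + q ^ t * u < q ^ (2*t) := by
          calc u + q ^ t * u < q ^ t * u + q ^ t := by
                have := Nat.add_lt_add_left (show u < q ^ t from huq) (q ^ t * u)
                omega
          _ = q ^ t * (u + 1) := by ring
          _ ≤ q ^ t * q ^ t := Nat.mul_le_mul_left _ (by omega)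
          _ = q ^ (2*t) := by ring
        rw [hkey, sum_digits_split q hq2 (2*t) _ _ hub,
          sum_digits_split q hq2 t _ _ huq,
          wt_lt q 2 hq2 (by omega)]
        omega
      · -- q^t ≤ i
        set r : ℕ := i.toNat - q ^ t with hr
        have hqtZ : ((q ^ t : ℕ) : ℤ) = (q:ℤ) ^ t := by push_cast; ring
        have hri : (r:ℤ) = i - (q:ℤ) ^ t := by
          rw [hr]
          push_cast [show q ^ t ≤ i.toNat by omega]
          omega
        have hrq : r ≤ q - 2 := by
          have : (r:ℤ) ≤ (q:ℤ) - 2 := by omega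
          exact_mod_cast this
        have hkeyZ : v = (r + q ^ t * ((r + 1) + q ^ t * 3) : ℕ) := by
          push_cast
          have hir : i = (r:ℤ) + (q:ℤ) ^ t := by omega
          rw [hvQ, hir]
          ring
        have hkey : v.toNat = r + q ^ t * ((r + 1) + q ^ t * 3) := by
          rw [hkeyZ, Int.toNat_natCast]
        rw [hkey, sum_digits_split q hq2 t _ _ (by omega),
          sum_digits_split q hq2 t _ _ (by omega),
          wt_lt q r hq2 (by omega), wt_lt q (r+1) hq2 (by omega),
          wt_lt q 3 hq2 (by omega)]
        omega
end

section
/- Let s ≥ 2 be an integer, q = 2^s, m an integer with m ≡ 2 (mod 4) and m ≥ 6, and n = q^m − 1. Let b = q^{m−2} and a = q^{(m−2)/2} + 1. Then gcd(a, n) = 1, and for every integer i with −(q−1) ≤ i ≤ q^{(m−2)/2} + q − 2, the residue (b + a·i) mod n belongs to T_{(q,m;1)}. -/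
lemma qw_zero (q : ℕ) : qWeight q 0 = 0 := by simp [qWeight]

lemma qw_step (q : ℕ) (hq : 2 ≤ q) (n : ℕ) :
    qWeight q n = n % q + qWeight q (n / q) := by
  rcases Nat.eq_zero_or_pos n with h | h
  · simp [h, qWeight]
  · unfold qWeight
    rw [Nat.digits_def' hq h]
    simp

lemma qw_lt (q r : ℕ) (hq : 2 ≤ q) (hr : r < q) : qWeight q r = r := by
  rw [qw_step q hq r, Nat.mod_eq_of_lt hr, Nat.div_eq_of_lt hr, qw_zero]
  omega

lemma qw_add (q k : ℕ) (hq : 2 ≤ q) : ∀ a b : ℕ, a < q ^ k →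
    qWeight q (a + b * q ^ k) = qWeight q a + qWeight q b := by
  induction k with
  | zero =>
    intro a b ha
    have h0 : a = 0 := by simpa using ha
    subst h0; simp [qw_zero]
  | succ k ih =>
    intro a b ha
    rw [qw_step q hq (a + b * q ^ (k+1)), qw_step q hq a]
    have hq0 : 0 < q := by omega
    have h1 : (a + b * q ^ (k+1)) % q = a % q := by
      rw [pow_succ, ← mul_assoc, Nat.add_mul_mod_self_right]
    have h2 : (a + b * q ^ (k+1)) / q = a / q + b * q ^ k := by
      rw [pow_succ, ← mul_assoc, Nat.add_mul_div_right _ _ hq0]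
    have h3 : a / q < q ^ k := by
      apply Nat.div_lt_of_lt_mul
      rw [mul_comm]; rwa [pow_succ] at ha
    rw [h1, h2, ih _ _ h3]
    omega

lemma qw_pow_sub_one (q : ℕ) (hq : 2 ≤ q) : ∀ h : ℕ, qWeight q (q ^ h - 1) = h * (q - 1) := by
  intro h
  induction h with
  | zero => simp [qw_zero]
  | succ h ih =>
    have hA : 1 ≤ q ^ h := Nat.one_le_pow _ _ (by omega)
    have hAq : q ≤ q ^ h * q := Nat.le_mul_of_pos_left q hA
    have key : q ^ (h+1) - 1 = (q - 1) + (q ^ h - 1) * q := by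
      have h2 : (q ^ h - 1) * q = q ^ h * q - q := by rw [Nat.sub_mul, one_mul]
      rw [pow_succ]
      omega
    rw [key, qw_step q hq, Nat.add_mul_mod_self_right, Nat.add_mul_div_right _ _ (by omega : 0 < q),
      Nat.mod_eq_of_lt (by omega), Nat.div_eq_of_lt (by omega), zero_add, ih]
    ring

lemma qw_pow_sub (q h t : ℕ) (hq : 2 ≤ q) (hh : 1 ≤ h) (ht1 : 1 ≤ t) (ht2 : t ≤ q) :
    qWeight q (q ^ h - t) = (q - t) + (h - 1) * (q - 1) := by
  obtain ⟨h', rfl⟩ : ∃ h', h = h' + 1 := ⟨h - 1, by omega⟩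
  have hA : 1 ≤ q ^ h' := Nat.one_le_pow _ _ (by omega)
  have hAq : q ≤ q ^ h' * q := Nat.le_mul_of_pos_left q hA
  have key : q ^ (h'+1) - t = (q - t) + (q ^ h' - 1) * q ^ 1 := by
    have h2 : (q ^ h' - 1) * q ^ 1 = q ^ h' * q - q := by
      rw [Nat.sub_mul, one_mul, pow_one]
    rw [pow_succ]
    omega
  rw [key, qw_add q 1 hq _ _ (by simpa using Nat.sub_lt_of_pos_le ht1 ht2),
    qw_lt q _ hq (by omega), qw_pow_sub_one q hq]
  simp

theorem stmt5 (s q m n : ℕ) (hs : 2 ≤ s) (hq : q = 2 ^ s)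
    (hm : 6 ≤ m) (hmod4 : m % 4 = 2) (hn : n = q ^ m - 1)
    (b a : ℤ) (hb : b = (q : ℤ) ^ (m - 2)) (ha : a = (q : ℤ) ^ ((m - 2) / 2) + 1) :
    Int.gcd a (n : ℤ) = 1 ∧
      ∀ i : ℤ, -((q : ℤ) - 1) ≤ i → i ≤ (q : ℤ) ^ ((m - 2) / 2) + (q : ℤ) - 2 →
        ((b + a * i) % (n : ℤ)).toNat ∈ Tset q m 1 := by
  have hq4 : 4 ≤ q := by
    calc (4:ℕ) = 2 ^ 2 := rfl
    _ ≤ 2 ^ s := Nat.pow_le_pow_right (by omega) hs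
    _ = q := hq.symm
  have hq2 : 2 ≤ q := by omega
  have hq2dvd : (2:ℕ) ∣ q := by rw [hq]; exact dvd_pow_self 2 (by omega)
  set k := (m - 2) / 2 with hk
  have hm2 : m - 2 = 2 * k := by omega
  have hk2 : 2 ≤ k := by omega
  obtain ⟨k', hk'⟩ : ∃ k', k = 2 * k' := ⟨k / 2, by omega⟩
  have hA1 : 1 ≤ q ^ k := Nat.one_le_pow _ _ (by omega)
  have hqA : q ≤ q ^ k := Nat.le_self_pow (by omega) q
  have hA16 : 16 ≤ q ^ k := by
    calc (16:ℕ) = 4 * 4 := rfl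
    _ ≤ q * q := Nat.mul_le_mul hq4 hq4
    _ = q ^ 2 := (sq q).symm
    _ ≤ q ^ k := Nat.pow_le_pow_right (by omega) hk2
  have hmk : m = 2 * k + 2 := by omega
  have hqm : q ^ m = q ^ k * q ^ k * (q * q) := by
    rw [hmk]; ring
  have hA2dvd : (2:ℕ) ∣ q ^ k := hq2dvd.trans (dvd_pow_self q (by omega))
  have hb2 : b = (q:ℤ) ^ k * (q:ℤ) ^ k := by rw [hb, hm2, two_mul, pow_add]
  have hAc : ((q ^ k : ℕ) : ℤ) = (q:ℤ) ^ k := by push_cast; rfl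
  -- gcd part
  have hgcd : Nat.gcd (q ^ k + 1) n = 1 := by
    set d := Nat.gcd (q ^ k + 1) n with hd
    have hd1 : d ∣ q ^ k + 1 := Nat.gcd_dvd_left _ _
    have hd2 : d ∣ n := Nat.gcd_dvd_right _ _
    have hAA : (q ^ k + 1) ∣ q ^ k * q ^ k - 1 := by
      refine ⟨q ^ k - 1, ?_⟩
      have hAA1 : 1 ≤ q ^ k * q ^ k := Nat.mul_le_mul hA1 hA1
      zify [hA1, hAA1]
      ring
    have hqq : q * q ≤ q ^ m := by
      rw [hqm]
      exact Nat.le_mul_of_pos_left _ (Nat.mul_pos (by omega) (by omega))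
    have heq : q ^ m - q * q = q * q * (q ^ k * q ^ k - 1) := by
      rw [hqm]
      have h1 : 1 ≤ q ^ k * q ^ k := Nat.mul_le_mul hA1 hA1
      zify [h1, Nat.le_mul_of_pos_left (q*q) (show 0 < q ^ k * q ^ k from Nat.mul_le_mul hA1 hA1)]
      ring
    have hd3 : d ∣ q ^ m - q * q := by
      rw [heq]
      exact Dvd.dvd.mul_left (hd1.trans hAA) _
    have hd4 : d ∣ q * q - 1 := by
      have h5 := Nat.dvd_sub hd2 hd3
      have harith : n - (q ^ m - q * q) = q * q - 1 := by omega
      rwa [harith] at h5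
    have hd5 : (q * q - 1) ∣ q ^ k - 1 := by
      have h6 : (q * q - 1) ∣ (q * q) ^ k' - 1 ^ k' := Nat.sub_dvd_pow_sub_pow _ _ _
      have h7 : (q * q) ^ k' = q ^ k := by
        rw [hk']; ring
      rwa [h7, one_pow] at h6
    have hd6 : d ∣ 2 := by
      have h8 := Nat.dvd_sub hd1 (hd4.trans hd5)
      have harith : (q ^ k + 1) - (q ^ k - 1) = 2 := by omega
      rwa [harith] at h8
    rcases (Nat.dvd_prime Nat.prime_two).mp hd6 with h1 | h2
    · exact h1
    · exfalso
      have h2d : (2:ℕ) ∣ q ^ k + 1 := h2 ▸ hd1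
      omega
  constructor
  · have hacast : a = ((q ^ k + 1 : ℕ) : ℤ) := by rw [ha]; push_cast; ring
    rw [hacast, Int.gcd_natCast_natCast]
    exact hgcd
  · intro i hlo hhi
    rw [← hAc] at hhi
    have hq16 : 16 ≤ q * q := by
      have : 4 * 4 ≤ q * q := Nat.mul_le_mul hq4 hq4
      omega
    have f1 : 16 * q ^ k ≤ q ^ k * q ^ k := Nat.mul_le_mul_right (q ^ k) hA16
    have f2 : q ^ k * q ^ k * 16 ≤ q ^ k * q ^ k * (q * q) := Nat.mul_le_mul_left _ hq16
    have hnval : n + 1 = q ^ m := by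
      have : 1 ≤ q ^ m := Nat.one_le_pow _ _ (by omega)
      omega
    -- closing helper
    have hclose : ∀ v : ℕ, b + a * i = (v : ℤ) → 1 ≤ v → v + 2 ≤ q ^ m →
        qWeight q v % 2 = 1 → ((b + a * i) % (n : ℤ)).toNat ∈ Tset q m 1 := by
      intro v hv hv1 hv2 hv3
      have hvn : (v:ℤ) < (n:ℤ) := by exact_mod_cast (show v < n by omega)
      rw [hv, Int.emod_eq_of_lt (by positivity) hvn, Int.toNat_natCast]
      simp only [Tset, Finset.mem_filter, Finset.mem_Icc]
      exact ⟨⟨hv1, by omega⟩, hv3⟩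
    rcases lt_or_ge i 0 with hneg | hpos
    · -- negative i : i = -t, 1 ≤ t ≤ q-1
      have ht1 : 1 ≤ (-i).toNat := by omega
      have ht2 : (-i).toNat ≤ q - 1 := by omega
      set t := (-i).toNat with htdef
      have hti : i = -(t:ℤ) := by omega
      have htA : t ≤ q ^ k := by omega
      have htA1 : t + 1 ≤ q ^ k := by omega
      apply hclose ((q ^ k - t) + (q ^ k - (t+1)) * q ^ k)
      · have hc1 : ((q ^ k - t : ℕ) : ℤ) = ((q ^ k : ℕ) : ℤ) - (t:ℤ) := by omega
        have hc2 : ((q ^ k - (t+1) : ℕ) : ℤ) = ((q ^ k : ℕ) : ℤ) - ((t:ℤ)+1) := by omega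
        rw [hb2, ha, hti]
        push_cast [hc1, hc2]
        ring
      · have : 1 ≤ q ^ k - t := by omega
        omega
      · have e2 : q ^ k - (t+1) ≤ q ^ k := Nat.sub_le _ _
        have e3 : (q ^ k - (t+1)) * q ^ k ≤ q ^ k * q ^ k := Nat.mul_le_mul_right _ e2
        have e4 : q ^ k - t ≤ q ^ k := Nat.sub_le _ _
        rw [hqm]
        omega
      · rw [qw_add q k hq2 _ _ (by omega : q ^ k - t < q ^ k),
          qw_pow_sub q k t hq2 (by omega) ht1 (by omega),
          qw_pow_sub q k (t+1) hq2 (by omega) (by omega) (by omega)]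
        omega
    · rcases lt_or_ge i ((q:ℤ) ^ k) with hsmall | hbig2
      · -- 0 ≤ i < q^k
        rw [← hAc] at hsmall
        set j := i.toNat with hjdef
        have hji : i = (j:ℤ) := by omega
        have hjlt : j < q ^ k := by omega
        apply hclose (j + (j + 1 * q ^ k) * q ^ k)
        · rw [hb2, ha, hji]
          push_cast
          ring
        · have e1 : 1 * 1 ≤ (j + 1 * q ^ k) * q ^ k := Nat.mul_le_mul (by omega) hA1
          omega
        · have e2 : j + 1 * q ^ k ≤ 2 * q ^ k := by omega
          have e3 : (j + 1 * q ^ k) * q ^ k ≤ (2 * q ^ k) * q ^ k := Nat.mul_le_mul_right _ e2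
          have e4 : (2 * q ^ k) * q ^ k = 2 * (q ^ k * q ^ k) := by ring
          rw [hqm]
          omega
        · rw [qw_add q k hq2 _ _ hjlt, qw_add q k hq2 j 1 hjlt, qw_lt q 1 hq2 (by omega)]
          omega
      · -- q^k ≤ i ≤ q^k + q - 2
        rw [← hAc] at hbig2
        set r := (i - ((q ^ k : ℕ) : ℤ)).toNat with hrdef
        have hri : i = ((q ^ k : ℕ) : ℤ) + (r:ℤ) := by omega
        have hr2 : r ≤ q - 2 := by omega
        have hrq : r < q := by omega
        have hrA : r < q ^ k := by omega
        have hr1A : r + 1 < q ^ k := by omega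
        apply hclose (r + ((r + 1) + 2 * q ^ k) * q ^ k)
        · rw [hb2, ha, hri]
          push_cast
          ring
        · have e1 : 1 * 1 ≤ ((r + 1) + 2 * q ^ k) * q ^ k := Nat.mul_le_mul (by omega) hA1
          omega
        · have e2 : (r+1) + 2 * q ^ k ≤ 3 * q ^ k := by omega
          have e3 : ((r+1) + 2 * q ^ k) * q ^ k ≤ (3 * q ^ k) * q ^ k := Nat.mul_le_mul_right _ e2
          have e4 : (3 * q ^ k) * q ^ k = 3 * (q ^ k * q ^ k) := by ring
          rw [hqm]
          omega
        · rw [qw_add q k hq2 _ _ hrA, qw_add q k hq2 (r+1) 2 hr1A,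
            qw_lt q r hq2 hrq, qw_lt q (r+1) hq2 (by omega), qw_lt q 2 hq2 (by omega)]
          omega
end

section
/- Let s ≥ 2 be an integer, q = 2^s, m = 6, and n = q^6 − 1. Let b = q^5 + q and a = (q^6 − 1)/(q − 1) − q^4 − 1. Then gcd(a, n) = 1, and for every integer i with −(q^2 − q) ≤ i ≤ q^2 − q, the residue (b + a·i) mod n belongs to T_{(q,m;0)}. -/
lemma sum_digits_ofDigits (q : ℕ) (hq : 1 < q) (L : List ℕ) (hL : ∀ d ∈ L, d < q) :
    (Nat.digits q (Nat.ofDigits q L)).sum = L.sum := by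
  induction L with
  | nil => simp
  | cons d L ih =>
    have hd : d < q := hL d (by simp)
    have hL' : ∀ x ∈ L, x < q := fun x hx => hL x (by simp [hx])
    have ih' := ih hL'
    rw [Nat.ofDigits_cons]
    rcases Nat.eq_zero_or_pos ((d : ℕ) + q * Nat.ofDigits q L) with h0 | h0
    · have hd0 : d = 0 := by omega
      have hx : q * Nat.ofDigits q L = 0 := by omega
      have hof : Nat.ofDigits q L = 0 := by
        rcases Nat.mul_eq_zero.mp hx with h | h
        · omega
        · exact h
      rw [hof] at ih'
      simp at ih'
      simp [hd0, hof, ← ih']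
    · rw [Nat.digits_def' hq h0]
      simp only [List.sum_cons]
      have h1 : ((d : ℕ) + q * Nat.ofDigits q L) % q = d := by
        rw [Nat.add_mul_mod_self_left, Nat.mod_eq_of_lt hd]
      have h2 : ((d : ℕ) + q * Nat.ofDigits q L) / q = Nat.ofDigits q L := by
        rw [Nat.add_mul_div_left _ _ (by omega : 0 < q), Nat.div_eq_of_lt hd, Nat.zero_add]
      rw [h1, h2, ih']

lemma mem_Tset_helper (q : ℕ) (hq : 2 ≤ q) (x c : ℤ) (L : List ℕ)
    (hL : ∀ d ∈ L, d < q) (hpar : L.sum % 2 = 0) (hne : L.sum ≠ 0)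
    (h2 : ((Nat.ofDigits q L : ℕ) : ℤ) ≤ (q : ℤ) ^ 6 - 2)
    (heq : x = ((Nat.ofDigits q L : ℕ) : ℤ) + c * ((q : ℤ) ^ 6 - 1)) :
    (x % (((q ^ 6 - 1 : ℕ)) : ℤ)).toNat ∈ Tset q 6 0 := by
  set v := Nat.ofDigits q L with hv
  have hq1 : 1 < q := hq
  have hsum := sum_digits_ofDigits q hq1 L hL
  rw [← hv] at hsum
  have hvpos : 1 ≤ v := by
    rcases Nat.eq_zero_or_pos v with h0 | h0
    · rw [h0] at hsum
      simp at hsum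
      omega
    · exact h0
  have hpow : 1 ≤ q ^ 6 := Nat.one_le_pow _ _ (by omega)
  have hcast : ((q ^ 6 - 1 : ℕ) : ℤ) = (q : ℤ) ^ 6 - 1 := by
    rw [Nat.cast_sub hpow]
    push_cast
    ring
  have hvnn : (0 : ℤ) ≤ (v : ℤ) := Int.natCast_nonneg v
  have hmod : x % ((q ^ 6 - 1 : ℕ) : ℤ) = (v : ℤ) := by
    rw [hcast, heq, Int.add_mul_emod_self_right]
    exact Int.emod_eq_of_lt hvnn (by linarith)
  rw [hmod, Int.toNat_natCast]
  have hle : v ≤ q ^ 6 - 2 := by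
    have h' : ((v + 2 : ℕ) : ℤ) ≤ ((q ^ 6 : ℕ) : ℤ) := by push_cast; linarith
    have h'' : v + 2 ≤ q ^ 6 := Nat.cast_le.mp h'
    omega
  rw [Tset, Finset.mem_filter, Finset.mem_Icc, qWeight]
  exact ⟨⟨hvpos, hle⟩, by rw [hsum]; exact hpar⟩


section Bounds
variable {q x y : ℤ}

lemma boundA (hq : 4 ≤ q) (hx : 0 ≤ x) (hy : 0 ≤ y) (hx2 : x ≤ q-2) (hy2 : y ≤ q-1)
    (hxy : x+y ≤ q-1) :
    y + (1+x)*q + (x+y)*q^2 + (x+y)*q^3 + y*q^4 + (1+x)*q^5 ≤ q^6 - 2 := by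
  have h0 : (0:ℤ) ≤ q := by linarith
  have p2 : (0:ℤ) ≤ q^2 := by positivity
  have p3 : (0:ℤ) ≤ q^3 := by positivity
  have p5 : (0:ℤ) ≤ q^5 := by positivity
  have h4 : q ≤ q^4 := le_self_pow₀ (by linarith) (by norm_num)
  have n2 : 0 ≤ (q-1-x-y)*q^2 := mul_nonneg (by linarith) p2
  have n3 : 0 ≤ (q-1-x-y)*q^3 := mul_nonneg (by linarith) p3
  have n5 : 0 ≤ (q-2-x)*q^5 := mul_nonneg (by linarith) p5
  have F1 : 0 ≤ (q-1-y)*(q^4-q) := mul_nonneg (by linarith) (by linarith)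
  have F2 : 0 ≤ (2*q-5-x-y)*q := mul_nonneg (by linarith) h0
  linarith

lemma boundB (hq : 4 ≤ q) (hx : 0 ≤ x) (hy : 0 ≤ y) (hx2 : x ≤ q-2) (hy2 : y ≤ q-2)
    (hxy : q ≤ x+y) :
    y + (1+x)*q + (x+y-q)*q^2 + (x+y-q+1)*q^3 + (y+1)*q^4 + (1+x)*q^5 ≤ q^6 - 2 := by
  have h0 : (0:ℤ) ≤ q := by linarith
  have p2 : (0:ℤ) ≤ q^2 := by positivity
  have p3 : (0:ℤ) ≤ q^3 := by positivity
  have p4 : (0:ℤ) ≤ q^4 := by positivity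
  have p5 : (0:ℤ) ≤ q^5 := by positivity
  have hq2 : q ≤ q^2 := le_self_pow₀ (by linarith) (by norm_num)
  have n1 : 0 ≤ (q-2-x)*q := mul_nonneg (by linarith) h0
  have n3 : 0 ≤ (2*q-2-x-y)*q^3 := mul_nonneg (by linarith) p3
  have n4 : 0 ≤ (q-2-y)*q^4 := mul_nonneg (by linarith) p4
  have n5 : 0 ≤ (q-2-x)*q^5 := mul_nonneg (by linarith) p5
  have G : 3*q^2 ≤ (2*q-1-x-y)*q^2 := mul_le_mul_of_nonneg_right (by linarith) p2
  linarith

lemma boundC (hq : 4 ≤ q) (hy : 0 ≤ y) (hy2 : y ≤ q-2) :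
    (y+1) + y*q^2 + y*q^3 + (y+1)*q^4 ≤ q^6 - 2 := by
  have h0 : (0:ℤ) ≤ q := by linarith
  have p2 : (0:ℤ) ≤ q^2 := by positivity
  have p3 : (0:ℤ) ≤ q^3 := by positivity
  have p4 : (0:ℤ) ≤ q^4 := by positivity
  have p5 : (0:ℤ) ≤ q^5 := by positivity
  have h5 : q ≤ q^5 := le_self_pow₀ (by linarith) (by norm_num)
  have h56 : 4*q^5 ≤ q*q^5 := mul_le_mul_of_nonneg_right (by linarith) p5
  have n1 : 0 ≤ (q-1)*q := mul_nonneg (by linarith) h0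
  have n2 : 0 ≤ (q-1-y)*q^2 := mul_nonneg (by linarith) p2
  have n3 : 0 ≤ (q-1-y)*q^3 := mul_nonneg (by linarith) p3
  have n4 : 0 ≤ (q-2-y)*q^4 := mul_nonneg (by linarith) p4
  linarith

lemma boundD (hq : 4 ≤ q) (hx : 1 ≤ x) (hy : 0 ≤ y) (hxq : x ≤ q-1) (hy2 : y ≤ q-2)
    (hxy : x+y ≤ q-1) :
    (q-1-y) + (q-x)*q + (q-1-(x+y))*q^2 + (q-1-(x+y))*q^3 + (q-1-y)*q^4 + (q-x)*q^5
      ≤ q^6 - 2 := by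
  have h0 : (0:ℤ) ≤ q := by linarith
  have p2 : (0:ℤ) ≤ q^2 := by positivity
  have p3 : (0:ℤ) ≤ q^3 := by positivity
  have p4 : (0:ℤ) ≤ q^4 := by positivity
  have p5 : (0:ℤ) ≤ q^5 := by positivity
  have hq2 : q ≤ q^2 := le_self_pow₀ (by linarith) (by norm_num)
  have n1 : 0 ≤ (x-1)*q := mul_nonneg (by linarith) h0
  have n3 : 0 ≤ (x+y)*q^3 := mul_nonneg (by linarith) p3
  have n4 : 0 ≤ y*q^4 := mul_nonneg (by linarith) p4
  have n5 : 0 ≤ (x-1)*q^5 := mul_nonneg (by linarith) p5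
  have G : 1*q^2 ≤ (x+y)*q^2 := mul_le_mul_of_nonneg_right (by linarith) p2
  linarith

lemma boundE (hq : 4 ≤ q) (hx : 1 ≤ x) (hy : 0 ≤ y) (hxq : x ≤ q-1) (hy2 : y ≤ q-2)
    (hxy : q ≤ x+y) :
    (q-1-y) + (q-x)*q + (2*q-1-(x+y))*q^2 + (2*q-2-(x+y))*q^3 + (q-2-y)*q^4 + (q-x)*q^5
      ≤ q^6 - 2 := by
  have h0 : (0:ℤ) ≤ q := by linarith
  have p2 : (0:ℤ) ≤ q^2 := by positivity
  have p3 : (0:ℤ) ≤ q^3 := by positivity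
  have p4 : (0:ℤ) ≤ q^4 := by positivity
  have p5 : (0:ℤ) ≤ q^5 := by positivity
  have h4 : q ≤ q^4 := le_self_pow₀ (by linarith) (by norm_num)
  have n1 : 0 ≤ (x-1)*q := mul_nonneg (by linarith) h0
  have n2 : 0 ≤ (x+y-q)*q^2 := mul_nonneg (by linarith) p2
  have n3 : 0 ≤ (x+y-q+1)*q^3 := mul_nonneg (by linarith) p3
  have n5 : 0 ≤ (x-1)*q^5 := mul_nonneg (by linarith) p5
  have G : 1*q^4 ≤ (y+1)*q^4 := mul_le_mul_of_nonneg_right (by linarith) p4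
  linarith

lemma boundF1 (hq : 4 ≤ q) (hy : 1 ≤ y) (hy2 : y ≤ q-2) :
    (q-y) + (q-y)*q^2 + (q-1-y)*q^3 + (q-1-y)*q^4 ≤ q^6 - 2 := by
  have h0 : (0:ℤ) ≤ q := by linarith
  have p2 : (0:ℤ) ≤ q^2 := by positivity
  have p3 : (0:ℤ) ≤ q^3 := by positivity
  have p4 : (0:ℤ) ≤ q^4 := by positivity
  have p5 : (0:ℤ) ≤ q^5 := by positivity
  have h5 : q ≤ q^5 := le_self_pow₀ (by linarith) (by norm_num)
  have h56 : 4*q^5 ≤ q*q^5 := mul_le_mul_of_nonneg_right (by linarith) p5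
  have n1 : 0 ≤ (q-1)*q := mul_nonneg (by linarith) h0
  have n2 : 0 ≤ (y-1)*q^2 := mul_nonneg (by linarith) p2
  have n3 : 0 ≤ y*q^3 := mul_nonneg (by linarith) p3
  have n4 : 0 ≤ y*q^4 := mul_nonneg (by linarith) p4
  linarith

lemma boundF2 (hq : 4 ≤ q) : 1 + q^2 ≤ q^6 - 2 := by
  have p2 : (0:ℤ) ≤ q^2 := by positivity
  have h4 : q ≤ q^4 := le_self_pow₀ (by linarith) (by norm_num)
  have hq2 : q ≤ q^2 := le_self_pow₀ (by linarith) (by norm_num)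
  have hqq : 4*q^2 ≤ q^4*q^2 := mul_le_mul_of_nonneg_right (by linarith) p2
  linarith

end Bounds

set_option maxHeartbeats 8000000 in
theorem stmt7 (s q n : ℕ) (hs : 2 ≤ s) (hq : q = 2 ^ s) (hn : n = q ^ 6 - 1)
    (b a : ℤ) (hb : b = (q : ℤ) ^ 5 + (q : ℤ))
    (ha : a = ((q : ℤ) ^ 6 - 1) / ((q : ℤ) - 1) - (q : ℤ) ^ 4 - 1) :
    Int.gcd a (n : ℤ) = 1 ∧
      ∀ i : ℤ, -((q : ℤ) ^ 2 - (q : ℤ)) ≤ i → i ≤ (q : ℤ) ^ 2 - (q : ℤ) →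
        ((b + a * i) % (n : ℤ)).toNat ∈ Tset q 6 0 := by
  have hq4 : 4 ≤ q := by
    rw [hq]
    calc 4 = 2 ^ 2 := by norm_num
    _ ≤ 2 ^ s := Nat.pow_le_pow_right (by norm_num) hs
  have hqz : (4 : ℤ) ≤ (q : ℤ) := by exact_mod_cast hq4
  have hqeven : 2 ∣ q := by rw [hq]; exact dvd_pow_self 2 (by omega)
  have ha' : a = (q : ℤ) ^ 5 + (q : ℤ) ^ 3 + (q : ℤ) ^ 2 + (q : ℤ) := by
    have hfac : (q : ℤ) ^ 6 - 1 = ((q : ℤ) - 1) * ((q:ℤ)^5 + (q:ℤ)^4 + (q:ℤ)^3 + (q:ℤ)^2 + (q:ℤ) + 1) := by ring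
    rw [ha, hfac, Int.mul_ediv_cancel_left _ (by linarith : (q : ℤ) - 1 ≠ 0)]
    ring
  have hn1 : 1 ≤ q ^ 6 := Nat.one_le_pow _ _ (by omega)
  have hnz : (n : ℤ) = (q : ℤ) ^ 6 - 1 := by
    rw [hn, Nat.cast_sub hn1]; push_cast; ring
  constructor
  · -- gcd part
    have hA : IsCoprime a ((q : ℤ) ^ 4 + (q : ℤ) ^ 2 + 1) := by
      refine ⟨(q : ℤ) ^ 2 * a, -((q:ℤ)^8 + (q:ℤ)^6 + 2*(q:ℤ)^5 + (q:ℤ)^4 + (q:ℤ)^2 - 1), ?_⟩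
      rw [ha']; ring
    have hB : IsCoprime a ((q : ℤ) ^ 2 - 1) := by
      rw [Int.isCoprime_iff_gcd_eq_one]
      set g := Int.gcd a ((q : ℤ) ^ 2 - 1) with hg
      have d1 : (g : ℤ) ∣ a := Int.gcd_dvd_left _ _
      have d2 : (g : ℤ) ∣ (q : ℤ) ^ 2 - 1 := Int.gcd_dvd_right _ _
      have h8 : (g : ℤ) ∣ 8 := by
        have key : (8 : ℤ) = (3*(q:ℤ) - 1) * a - (3*(q:ℤ)^4 - (q:ℤ)^3 + 6*(q:ℤ)^2 + (q:ℤ) + 8) * ((q:ℤ)^2 - 1) := by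
          rw [ha']; ring
        rw [key]
        exact dvd_sub (d1.mul_left _) (d2.mul_left _)
      have h8' : g ∣ 8 := by exact_mod_cast h8
      have hodd : ¬ 2 ∣ g := by
        intro h2g
        have h2 : (2 : ℤ) ∣ (q : ℤ) ^ 2 - 1 := dvd_trans (by exact_mod_cast h2g) d2
        obtain ⟨t, ht⟩ := hqeven
        obtain ⟨c, hc⟩ := h2
        have hq2 : (q : ℤ) ^ 2 = 2 * (2 * (t : ℤ) ^ 2) := by
          rw [ht]; push_cast; ring
        rw [hq2] at hc
        have hdvd1 : (2 : ℤ) ∣ 1 := ⟨2 * (t : ℤ) ^ 2 - c, by linarith⟩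
        norm_num at hdvd1
      have : g ∣ 2 ^ 3 := by norm_num at h8' ⊢; exact h8'
      rcases (Nat.dvd_prime_pow Nat.prime_two).mp this with ⟨k, hk, hgk⟩
      rcases Nat.eq_zero_or_pos k with h | h
      · rw [hgk, h]; rfl
      · exact absurd (by rw [hgk]; exact dvd_pow_self 2 (by omega)) hodd
    have hAB : IsCoprime a ((q : ℤ) ^ 6 - 1) := by
      have := hB.mul_right hA
      rwa [show ((q:ℤ)^2 - 1) * ((q:ℤ)^4 + (q:ℤ)^2 + 1) = (q:ℤ)^6 - 1 by ring] at this
    rw [hnz]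
    exact Int.isCoprime_iff_gcd_eq_one.mp hAB
  · -- main part
    intro i hlo hhi
    rw [hb, ha', hn]
    have hq2q : q ≤ q ^ 2 := Nat.le_self_pow (by norm_num) q
    have hqq : q ^ 2 = q * q := by ring
    rcases le_or_gt 0 i with hpos | hneg
    · -- i ≥ 0
      lift i to ℕ using hpos with k hk
      have hk2 : k + q ≤ q * q := by
        have h' : ((k + q : ℕ) : ℤ) ≤ ((q * q : ℕ) : ℤ) := by push_cast; linarith [hhi]
        exact Nat.cast_le.mp h'
      set i0 := k % q with hi0def
      set i1 := k / q with hi1def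
      have hdm : q * i1 + i0 = k := Nat.div_add_mod k q
      have hi0 : i0 < q := Nat.mod_lt _ (by omega)
      have hi1q : i1 < q := (Nat.div_lt_iff_lt_mul (by omega : 0 < q)).mpr
        (lt_of_lt_of_le (by omega : k < k + q) hk2)
      have hmulq : q * (q - 1) + q = q * q := by
        zify [show 1 ≤ q by omega]; ring
      have hedge : i1 = q - 1 → i0 = 0 := by
        intro h
        rw [h] at hdm
        have : i0 ≤ 0 := by linarith
        omega
      -- integer versions of the basic facts
      have hkz : (q : ℤ) * (i1 : ℤ) + (i0 : ℤ) = (k : ℤ) := by exact_mod_cast hdm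
      have hi0z : (i0 : ℤ) < (q : ℤ) := by exact_mod_cast hi0
      have hi1z : (i1 : ℤ) < (q : ℤ) := by exact_mod_cast hi1q
      have hi0nn : (0 : ℤ) ≤ (i0 : ℤ) := Int.natCast_nonneg _
      have hi1nn : (0 : ℤ) ≤ (i1 : ℤ) := Int.natCast_nonneg _
      by_cases hC : i0 = q - 1
      · -- Case C : digits [i1+1, 0, i1, i1, i1+1]
        have hi1' : i1 ≤ q - 2 := by
          have : i1 ≠ q - 1 := fun h => by have := hedge h; omega
          omega
        have hi1z' : (i1 : ℤ) ≤ (q : ℤ) - 2 := by omega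
        have hkz' : (k : ℤ) = (q : ℤ) * (i1 : ℤ) + ((q : ℤ) - 1) := by
          have h0 : ((i0 : ℕ) : ℤ) = (q : ℤ) - 1 := by omega
          linarith [hkz]
        have hc : ((Nat.ofDigits q [i1+1, 0, i1, i1, i1+1] : ℕ) : ℤ)
            = ((i1:ℤ)+1) + (i1:ℤ)*(q:ℤ)^2 + (i1:ℤ)*(q:ℤ)^3 + ((i1:ℤ)+1)*(q:ℤ)^4 := by
          simp only [Nat.ofDigits_cons, Nat.ofDigits_nil]
          push_cast
          ring
        apply mem_Tset_helper q (by omega) _ ((i1 : ℤ) + 1) [i1+1, 0, i1, i1, i1+1]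
        · intro d hd; simp at hd; omega
        · simp only [List.sum_cons, List.sum_nil]; omega
        · simp only [List.sum_cons, List.sum_nil]; omega
        · rw [hc]
          linarith [boundC hqz hi1nn hi1z']
        · rw [hc, hkz']
          ring
      · by_cases hAcase : i0 + i1 ≤ q - 1
        · -- Case A : digits [i1, 1+i0, i0+i1, i0+i1, i1, 1+i0]
          have hc : ((Nat.ofDigits q [i1, 1+i0, i0+i1, i0+i1, i1, 1+i0] : ℕ) : ℤ)
              = (i1:ℤ) + (1+(i0:ℤ))*(q:ℤ) + ((i0:ℤ)+(i1:ℤ))*(q:ℤ)^2 + ((i0:ℤ)+(i1:ℤ))*(q:ℤ)^3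
                + (i1:ℤ)*(q:ℤ)^4 + (1+(i0:ℤ))*(q:ℤ)^5 := by
            simp only [Nat.ofDigits_cons, Nat.ofDigits_nil]
            push_cast
            ring
          apply mem_Tset_helper q (by omega) _ (i1 : ℤ) [i1, 1+i0, i0+i1, i0+i1, i1, 1+i0]
          · intro d hd; simp at hd; omega
          · simp only [List.sum_cons, List.sum_nil]; omega
          · simp only [List.sum_cons, List.sum_nil]; omega
          · rw [hc]
            have htz : (i0:ℤ) + (i1:ℤ) ≤ (q:ℤ) - 1 := by omega
            have hi0z' : (i0:ℤ) ≤ (q:ℤ) - 2 := by omega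
            linarith [boundA hqz hi0nn hi1nn hi0z' (by omega : (i1:ℤ) ≤ (q:ℤ)-1) htz]
          · rw [hc, ← hkz]
            ring
        · -- Case B : digits [i1, 1+i0, i0+i1-q, i0+i1-q+1, i1+1, 1+i0]
          have ht : q ≤ i0 + i1 := by omega
          have hi1' : i1 ≤ q - 2 := by
            have : i1 ≠ q - 1 := fun h => by have := hedge h; omega
            omega
          have hi0' : i0 ≤ q - 2 := by omega
          have e2 : ((i0 + i1 - q : ℕ) : ℤ) = (i0:ℤ) + (i1:ℤ) - (q:ℤ) := by omega
          have hc : ((Nat.ofDigits q [i1, 1+i0, i0+i1-q, i0+i1-q+1, i1+1, 1+i0] : ℕ) : ℤ)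
              = (i1:ℤ) + (1+(i0:ℤ))*(q:ℤ) + ((i0:ℤ)+(i1:ℤ)-(q:ℤ))*(q:ℤ)^2
                + ((i0:ℤ)+(i1:ℤ)-(q:ℤ)+1)*(q:ℤ)^3 + ((i1:ℤ)+1)*(q:ℤ)^4 + (1+(i0:ℤ))*(q:ℤ)^5 := by
            simp only [Nat.ofDigits_cons, Nat.ofDigits_nil]
            push_cast [e2]
            ring
          apply mem_Tset_helper q (by omega) _ (i1 : ℤ) [i1, 1+i0, i0+i1-q, i0+i1-q+1, i1+1, 1+i0]
          · intro d hd; simp at hd; omega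
          · simp only [List.sum_cons, List.sum_nil]; omega
          · simp only [List.sum_cons, List.sum_nil]; omega
          · rw [hc]
            have htz : (q:ℤ) ≤ (i0:ℤ) + (i1:ℤ) := by omega
            have hi1z' : (i1:ℤ) ≤ (q:ℤ) - 2 := by omega
            have hi0z' : (i0:ℤ) ≤ (q:ℤ) - 2 := by omega
            linarith [boundB hqz hi0nn hi1nn hi0z' hi1z' htz]
          · rw [hc, ← hkz]
            ring
    · -- i < 0
      obtain ⟨j, rfl⟩ : ∃ j : ℕ, i = -(j : ℤ) := ⟨(-i).toNat, by omega⟩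
      have hj1 : 1 ≤ j := by omega
      have hj2 : j + q ≤ q * q := by
        have h' : ((j + q : ℕ) : ℤ) ≤ ((q * q : ℕ) : ℤ) := by push_cast; linarith [hlo]
        exact Nat.cast_le.mp h'
      set j0 := j % q with hj0def
      set j1 := j / q with hj1def
      have hdm : q * j1 + j0 = j := Nat.div_add_mod j q
      have hj0 : j0 < q := Nat.mod_lt _ (by omega)
      have hj1q : j1 < q := (Nat.div_lt_iff_lt_mul (by omega : 0 < q)).mpr
        (lt_of_lt_of_le (by omega : j < j + q) hj2)
      have hmulq : q * (q - 1) + q = q * q := by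
        zify [show 1 ≤ q by omega]; ring
      have hedge : j1 = q - 1 → j0 = 0 := by
        intro h
        rw [h] at hdm
        have : j0 ≤ 0 := by linarith
        omega
      have hjz : (q : ℤ) * (j1 : ℤ) + (j0 : ℤ) = (j : ℤ) := by exact_mod_cast hdm
      have hj0z : (j0 : ℤ) < (q : ℤ) := by exact_mod_cast hj0
      have hj1z : (j1 : ℤ) < (q : ℤ) := by exact_mod_cast hj1q
      have hj0nn : (0 : ℤ) ≤ (j0 : ℤ) := Int.natCast_nonneg _
      have hj1nn : (0 : ℤ) ≤ (j1 : ℤ) := Int.natCast_nonneg _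
      by_cases hF : j0 = 0
      · have hj1pos : 1 ≤ j1 := by
          rcases Nat.eq_zero_or_pos j1 with h | h
          · rw [h, hF] at hdm; simp at hdm; omega
          · exact h
        by_cases hF2 : j1 = q - 1
        · -- Case F2 : digits [1, 0, 1]
          have hjz' : (j : ℤ) = (q : ℤ) * ((q : ℤ) - 1) := by
            have h1 : ((j1 : ℕ) : ℤ) = (q : ℤ) - 1 := by omega
            have h0 : ((j0 : ℕ) : ℤ) = 0 := by omega
            rw [h1, h0] at hjz
            linarith
          have hc : ((Nat.ofDigits q [1, 0, 1] : ℕ) : ℤ) = 1 + (q:ℤ)^2 := by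
            simp only [Nat.ofDigits_cons, Nat.ofDigits_nil]
            push_cast
            ring
          apply mem_Tset_helper q (by omega) _ (1 - (q : ℤ)) [1, 0, 1]
          · intro d hd; simp at hd; omega
          · simp only [List.sum_cons, List.sum_nil]; omega
          · simp only [List.sum_cons, List.sum_nil]; omega
          · rw [hc]
            linarith [boundF2 hqz]
          · rw [hc, hjz']
            ring
        · -- Case F1 : digits [q-j1, 0, q-j1, q-1-j1, q-1-j1]
          have hj1' : j1 ≤ q - 2 := by omega
          have hj1z' : (j1 : ℤ) ≤ (q : ℤ) - 2 := by omega
          have e0 : ((q - j1 : ℕ) : ℤ) = (q:ℤ) - (j1:ℤ) := by omega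
          have e3 : ((q - 1 - j1 : ℕ) : ℤ) = (q:ℤ) - 1 - (j1:ℤ) := by omega
          have hjz' : (j : ℤ) = (q : ℤ) * (j1 : ℤ) := by
            have h0 : ((j0 : ℕ) : ℤ) = 0 := by omega
            rw [h0] at hjz
            linarith
          have hc : ((Nat.ofDigits q [q-j1, 0, q-j1, q-1-j1, q-1-j1] : ℕ) : ℤ)
              = ((q:ℤ)-(j1:ℤ)) + ((q:ℤ)-(j1:ℤ))*(q:ℤ)^2 + ((q:ℤ)-1-(j1:ℤ))*(q:ℤ)^3
                + ((q:ℤ)-1-(j1:ℤ))*(q:ℤ)^4 := by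
            simp only [Nat.ofDigits_cons, Nat.ofDigits_nil]
            push_cast [e0, e3]
            ring
          apply mem_Tset_helper q (by omega) _ (-(j1 : ℤ)) [q-j1, 0, q-j1, q-1-j1, q-1-j1]
          · intro d hd; simp at hd; omega
          · simp only [List.sum_cons, List.sum_nil]; omega
          · simp only [List.sum_cons, List.sum_nil]; omega
          · rw [hc]
            linarith [boundF1 hqz (by omega : (1:ℤ) ≤ (j1:ℤ)) hj1z']
          · rw [hc, hjz']
            ring
      · have hj0pos : 1 ≤ j0 := by omega
        have hj0z1 : (1 : ℤ) ≤ (j0 : ℤ) := by omega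
        have hj1' : j1 ≤ q - 2 := by
          have : j1 ≠ q - 1 := fun h => by have := hedge h; omega
          omega
        have hj1z' : (j1 : ℤ) ≤ (q : ℤ) - 2 := by omega
        by_cases hD : j0 + j1 ≤ q - 1
        · -- Case D : digits [q-1-j1, q-j0, q-1-(j0+j1), q-1-(j0+j1), q-1-j1, q-j0]
          have e0 : ((q - 1 - j1 : ℕ) : ℤ) = (q:ℤ) - 1 - (j1:ℤ) := by omega
          have e1 : ((q - j0 : ℕ) : ℤ) = (q:ℤ) - (j0:ℤ) := by omega
          have e2 : ((q - 1 - (j0 + j1) : ℕ) : ℤ) = (q:ℤ) - 1 - ((j0:ℤ) + (j1:ℤ)) := by omega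
          have hc : ((Nat.ofDigits q [q-1-j1, q-j0, q-1-(j0+j1), q-1-(j0+j1), q-1-j1, q-j0] : ℕ) : ℤ)
              = ((q:ℤ)-1-(j1:ℤ)) + ((q:ℤ)-(j0:ℤ))*(q:ℤ) + ((q:ℤ)-1-((j0:ℤ)+(j1:ℤ)))*(q:ℤ)^2
                + ((q:ℤ)-1-((j0:ℤ)+(j1:ℤ)))*(q:ℤ)^3 + ((q:ℤ)-1-(j1:ℤ))*(q:ℤ)^4
                + ((q:ℤ)-(j0:ℤ))*(q:ℤ)^5 := by
            simp only [Nat.ofDigits_cons, Nat.ofDigits_nil]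
            push_cast [e0, e1, e2]
            ring
          apply mem_Tset_helper q (by omega) _ (-((j1 : ℤ) + 1))
            [q-1-j1, q-j0, q-1-(j0+j1), q-1-(j0+j1), q-1-j1, q-j0]
          · intro d hd; simp at hd; omega
          · simp only [List.sum_cons, List.sum_nil]; omega
          · simp only [List.sum_cons, List.sum_nil]; omega
          · rw [hc]
            have huz : (j0:ℤ) + (j1:ℤ) ≤ (q:ℤ) - 1 := by omega
            linarith [boundD hqz hj0z1 hj1nn (by omega : (j0:ℤ) ≤ (q:ℤ)-1) hj1z' huz]
          · rw [hc, ← hjz]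
            ring
        · -- Case E : digits [q-1-j1, q-j0, 2q-1-(j0+j1), 2q-2-(j0+j1), q-2-j1, q-j0]
          have hu : q ≤ j0 + j1 := by omega
          have huz : (q:ℤ) ≤ (j0:ℤ) + (j1:ℤ) := by omega
          have e0 : ((q - 1 - j1 : ℕ) : ℤ) = (q:ℤ) - 1 - (j1:ℤ) := by omega
          have e1 : ((q - j0 : ℕ) : ℤ) = (q:ℤ) - (j0:ℤ) := by omega
          have e2 : ((2*q - 1 - (j0 + j1) : ℕ) : ℤ) = 2*(q:ℤ) - 1 - ((j0:ℤ) + (j1:ℤ)) := by omega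
          have e3 : ((2*q - 2 - (j0 + j1) : ℕ) : ℤ) = 2*(q:ℤ) - 2 - ((j0:ℤ) + (j1:ℤ)) := by omega
          have e4 : ((q - 2 - j1 : ℕ) : ℤ) = (q:ℤ) - 2 - (j1:ℤ) := by omega
          have hc : ((Nat.ofDigits q [q-1-j1, q-j0, 2*q-1-(j0+j1), 2*q-2-(j0+j1), q-2-j1, q-j0] : ℕ) : ℤ)
              = ((q:ℤ)-1-(j1:ℤ)) + ((q:ℤ)-(j0:ℤ))*(q:ℤ) + (2*(q:ℤ)-1-((j0:ℤ)+(j1:ℤ)))*(q:ℤ)^2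
                + (2*(q:ℤ)-2-((j0:ℤ)+(j1:ℤ)))*(q:ℤ)^3 + ((q:ℤ)-2-(j1:ℤ))*(q:ℤ)^4
                + ((q:ℤ)-(j0:ℤ))*(q:ℤ)^5 := by
            simp only [Nat.ofDigits_cons, Nat.ofDigits_nil]
            push_cast [e0, e1, e2, e3, e4]
            ring
          apply mem_Tset_helper q (by omega) _ (-((j1 : ℤ) + 1))
            [q-1-j1, q-j0, 2*q-1-(j0+j1), 2*q-2-(j0+j1), q-2-j1, q-j0]
          · intro d hd; simp at hd; omega
          · simp only [List.sum_cons, List.sum_nil]; omega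
          · simp only [List.sum_cons, List.sum_nil]; omega
          · rw [hc]
            linarith [boundE hqz hj0z1 hj1nn (by omega : (j0:ℤ) ≤ (q:ℤ)-1) hj1z' huz]
          · rw [hc, ← hjz]
            ring
end

section
/- Let s ≥ 2 be an integer, q = 2^s, m an integer with m ≡ 0 (mod 4) and m ≥ 4, and n = q^m − 1. Let b = q^{m−1} and a = ((q−2)/2)·((q^m − 1)/(q − 1)) + (q^{(m−2)/2} − 1)/(q − 1). Then gcd(a, n) = 1, and for every integer i with 1 ≤ i ≤ q^{(m−2)/2}, the residue (b + a·i) mod n belongs to T_{(q,m;0)}. -/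
namespace StmtAux

lemma wt_zero (q : ℕ) : qWeight q 0 = 0 := by simp [qWeight]

lemma wt_eq {q : ℕ} (hq : 2 ≤ q) (n : ℕ) :
    qWeight q n = n % q + qWeight q (n / q) := by
  rcases Nat.eq_zero_or_pos n with rfl | hn
  · simp [qWeight]
  · rw [qWeight, Nat.digits_def' (by omega : 1 < q) hn]
    simp [qWeight]

lemma wt_lt {q d : ℕ} (hq : 2 ≤ q) (hd : d < q) : qWeight q d = d := by
  rw [wt_eq hq, Nat.mod_eq_of_lt hd, Nat.div_eq_of_lt hd, wt_zero]
  omega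

lemma wt_split {q : ℕ} (hq : 2 ≤ q) :
    ∀ (k x y : ℕ), x < q ^ k →
      qWeight q (x + q ^ k * y) = qWeight q x + qWeight q y := by
  intro k
  induction k with
  | zero =>
    intro x y hx
    have hx0 : x = 0 := by simpa using hx
    subst hx0
    simp [wt_zero]
  | succ k ih =>
    intro x y hx
    have hq0 : 0 < q := by omega
    have hrw : q ^ (k + 1) * y = q * (q ^ k * y) := by ring
    have h1 : (x + q ^ (k + 1) * y) % q = x % q := by
      rw [hrw, Nat.add_mul_mod_self_left]
    have h2 : (x + q ^ (k + 1) * y) / q = x / q + q ^ k * y := by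
      rw [hrw, Nat.add_mul_div_left _ _ hq0]
    have hx' : x / q < q ^ k := by
      rw [Nat.div_lt_iff_lt_mul hq0, ← pow_succ]
      exact hx
    rw [wt_eq hq (x + q ^ (k + 1) * y), h1, h2, ih _ _ hx', wt_eq hq x]
    omega

lemma wt_compl {q : ℕ} (hq : 2 ≤ q) :
    ∀ (r W : ℕ), W < q ^ r →
      qWeight q (q ^ r - 1 - W) + qWeight q W = r * (q - 1) := by
  intro r
  induction r with
  | zero =>
    intro W hW
    have hW0 : W = 0 := by simpa using hW
    subst hW0
    simp [wt_zero]
  | succ r ih =>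
    intro W hW
    have hq0 : 0 < q := by omega
    have hW' : W / q < q ^ r := by
      rw [Nat.div_lt_iff_lt_mul hq0, ← pow_succ]
      exact hW
    have hdm : q * (W / q) + W % q = W := Nat.div_add_mod W q
    have hm0 : W % q < q := Nat.mod_lt _ hq0
    have hZ : q * (W / q) + q ≤ q ^ (r + 1) := by
      calc q * (W / q) + q = q * (W / q + 1) := by ring
      _ ≤ q * q ^ r := Nat.mul_le_mul_left _ (by omega)
      _ = q ^ (r + 1) := (pow_succ' q r).symm
    have hms : q * (q ^ r - 1 - W / q) = q ^ (r + 1) - q - q * (W / q) := by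
      rw [Nat.mul_sub, Nat.mul_sub, mul_one, ← pow_succ']
    have h1q : 1 ≤ q ^ r := Nat.one_le_pow _ _ hq0
    have hsplit : q ^ (r + 1) - 1 - W =
        (q - 1 - W % q) + q ^ 1 * (q ^ r - 1 - W / q) := by
      rw [pow_one, hms]
      omega
    have ihW := ih (W / q) hW'
    have hlt : q - 1 - W % q < q ^ 1 := by rw [pow_one]; omega
    rw [hsplit, wt_split hq 1 _ _ hlt, wt_lt hq (by omega), wt_eq hq W]
    have hstep : (r + 1) * (q - 1) = r * (q - 1) + (q - 1) := by ring
    omega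

/-- repunit -/
def rep (q k : ℕ) : ℕ := ∑ j ∈ Finset.range k, q ^ j

lemma rep_succ (q k : ℕ) : rep q (k + 1) = rep q k + q ^ k :=
  Finset.sum_range_succ _ _

lemma rep_mul {q : ℕ} (hq : 1 ≤ q) (k : ℕ) : (q - 1) * rep q k + 1 = q ^ k := by
  obtain ⟨p, rfl⟩ : ∃ p, q = p + 1 := ⟨q - 1, by omega⟩
  induction k with
  | zero => simp [rep]
  | succ k ih =>
    rw [rep_succ]
    calc (p + 1 - 1) * (rep (p + 1) k + (p + 1) ^ k) + 1
        = ((p + 1 - 1) * rep (p + 1) k + 1) + p * (p + 1) ^ k := by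
          simp; ring
      _ = (p + 1) ^ k + p * (p + 1) ^ k := by rw [ih]
      _ = (p + 1) ^ (k + 1) := by ring
  
lemma rep_ge {q : ℕ} (hq : 1 ≤ q) (k : ℕ) : k ≤ rep q k := by
  induction k with
  | zero => simp
  | succ k ih =>
    have : 1 ≤ q ^ k := Nat.one_le_pow _ _ hq
    rw [rep_succ]; omega

lemma rep_mod {q : ℕ} (hq : 1 ≤ q) (k : ℕ) : (q - 1) ∣ rep q k - k := by
  induction k with
  | zero => simp [rep]
  | succ k ih =>
    have h1 : 1 ≤ q ^ k := Nat.one_le_pow _ _ hq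
    have h2 : k ≤ rep q k := rep_ge hq k
    have h3 : rep q (k + 1) - (k + 1) = (rep q k - k) + (q ^ k - 1) := by
      rw [rep_succ]; omega
    rw [h3]
    refine dvd_add ih ?_
    have := Nat.sub_dvd_pow_sub_pow q 1 k
    simpa using this

end StmtAux


set_option maxHeartbeats 1000000 in
theorem stmt8 (s q m n : ℕ) (hs : 2 ≤ s) (hq : q = 2 ^ s)
    (hm : 4 ≤ m) (hmod4 : m % 4 = 0) (hn : n = q ^ m - 1)
    (b a : ℤ) (hb : b = (q : ℤ) ^ (m - 1))
    (ha : a = (((q : ℤ) - 2) / 2) * (((q : ℤ) ^ m - 1) / ((q : ℤ) - 1)) +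
      ((q : ℤ) ^ ((m - 2) / 2) - 1) / ((q : ℤ) - 1)) :
    Int.gcd a (n : ℤ) = 1 ∧
      ∀ i : ℤ, 1 ≤ i → i ≤ (q : ℤ) ^ ((m - 2) / 2) →
        ((b + a * i) % (n : ℤ)).toNat ∈ Tset q m 0 := by
  classical
  open StmtAux in
  -- basic facts about q
  obtain ⟨s', rfl⟩ : ∃ s', s = s' + 2 := ⟨s - 2, by omega⟩
  have ht1 : 1 ≤ 2 ^ s' := Nat.one_le_two_pow
  have hq4t : q = 4 * 2 ^ s' := by rw [hq]; ring
  have hq4 : 4 ≤ q := by omega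
  have hq2 : 2 ≤ q := by omega
  have hq1 : 1 ≤ q := by omega
  obtain ⟨r, rfl⟩ : ∃ r, m = 2 * r + 2 := ⟨(m - 2) / 2, by omega⟩
  have hrodd : r % 2 = 1 := by omega
  have hr1 : 1 ≤ r := by omega
  have hrr : (2 * r + 2 - 2) / 2 = r := by omega
  -- resolve the integer divisions in `a`
  set Q1 : ℕ := q / 2 - 1 with hQ1
  have h2Q1 : 2 * Q1 + 2 = q := by omega
  have hdiv1 : ((q : ℤ) - 2) / 2 = (Q1 : ℤ) := by
    have h : (q : ℤ) - 2 = 2 * (Q1 : ℤ) := by omega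
    rw [h, Int.mul_ediv_cancel_left _ (by norm_num)]
  have hqz1 : ((q : ℤ) - 1) ≠ 0 := by
    have : (4 : ℤ) ≤ (q : ℤ) := by exact_mod_cast hq4
    omega
  have hrepm : ((q : ℤ) - 1) * (rep q (2 * r + 2) : ℤ) = (q : ℤ) ^ (2 * r + 2) - 1 := by
    have h := rep_mul hq1 (2 * r + 2)
    have hc : (((q - 1) * rep q (2 * r + 2) + 1 : ℕ) : ℤ) = ((q ^ (2 * r + 2) : ℕ) : ℤ) :=
      congrArg (fun x : ℕ => (x : ℤ)) h
    push_cast at hc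
    have hcast : ((q - 1 : ℕ) : ℤ) = (q : ℤ) - 1 := by omega
    rw [hcast] at hc
    linarith
  have hrepr : ((q : ℤ) - 1) * (rep q r : ℤ) = (q : ℤ) ^ r - 1 := by
    have h := rep_mul hq1 r
    have hc : (((q - 1) * rep q r + 1 : ℕ) : ℤ) = ((q ^ r : ℕ) : ℤ) :=
      congrArg (fun x : ℕ => (x : ℤ)) h
    push_cast at hc
    have hcast : ((q - 1 : ℕ) : ℤ) = (q : ℤ) - 1 := by omega
    rw [hcast] at hc
    linarith
  have hdiv2 : ((q : ℤ) ^ (2 * r + 2) - 1) / ((q : ℤ) - 1) = (rep q (2 * r + 2) : ℤ) := by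
    rw [← hrepm, Int.mul_ediv_cancel_left _ hqz1]
  have hdiv3 : ((q : ℤ) ^ r - 1) / ((q : ℤ) - 1) = (rep q r : ℤ) := by
    rw [← hrepr, Int.mul_ediv_cancel_left _ hqz1]
  set aN : ℕ := Q1 * rep q (2 * r + 2) + rep q r with haNdef
  have haN : a = (aN : ℤ) := by
    rw [ha, hrr, hdiv1, hdiv2, hdiv3, haNdef]
    push_cast
    ring
  -- ℕ versions of repunit identities
  have hm' : (q - 1) * rep q (2 * r + 2) + 1 = q ^ (2 * r + 2) := rep_mul hq1 _
  have hr' : (q - 1) * rep q r + 1 = q ^ r := rep_mul hq1 _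
  have hq_le : q ≤ q ^ (2 * r + 2) := Nat.le_self_pow (by omega) q
  have hqr1 : 1 ≤ q ^ r := Nat.one_le_pow _ _ (by omega)
  constructor
  · -- gcd part
    rw [haN, hn, Int.gcd_natCast_natCast]
    set g : ℕ := Nat.gcd aN (q ^ (2 * r + 2) - 1) with hg
    have hga : g ∣ aN := Nat.gcd_dvd_left _ _
    have hgn : g ∣ q ^ (2 * r + 2) - 1 := Nat.gcd_dvd_right _ _
    -- g ∣ q^r - 1
    have key1 : (q - 1) * aN = Q1 * (q ^ (2 * r + 2) - 1) + (q ^ r - 1) := by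
      have e1 : (q - 1) * rep q (2 * r + 2) = q ^ (2 * r + 2) - 1 := by omega
      have e2 : (q - 1) * rep q r = q ^ r - 1 := by omega
      rw [haNdef, Nat.mul_add,
        show (q - 1) * (Q1 * rep q (2 * r + 2)) = Q1 * ((q - 1) * rep q (2 * r + 2)) by ring,
        e1, e2]
    have hg1 : g ∣ q ^ r - 1 := by
      have hd1 : g ∣ (q - 1) * aN := Dvd.dvd.mul_left hga _
      have hd2 : g ∣ Q1 * (q ^ (2 * r + 2) - 1) := Dvd.dvd.mul_left hgn _
      rw [key1] at hd1
      exact (Nat.dvd_add_right hd2).mp hd1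
    -- g ∣ q^2 - 1
    have h2r : q ^ r - 1 ∣ q ^ (2 * r) - 1 := by
      have h := Nat.sub_dvd_pow_sub_pow (q ^ r) 1 2
      rw [one_pow, ← pow_mul, mul_comm r 2] at h
      exact h
    have hE1 : q ^ 2 * q ^ (2 * r) = q ^ (2 * r + 2) := by
      rw [← pow_add]; ring_nf
    have h2r1 : 1 ≤ q ^ (2 * r) := Nat.one_le_pow _ _ (by omega)
    have hq21 : q ^ 2 ≥ 4 := by
      calc (4:ℕ) ≤ q := hq4
      _ ≤ q ^ 2 := Nat.le_self_pow (by omega) q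
    have hE2 : q ^ 2 * (q ^ (2 * r) - 1) = q ^ (2 * r + 2) - q ^ 2 := by
      rw [Nat.mul_sub, mul_one, hE1]
    have hg2 : g ∣ q ^ 2 - 1 := by
      have hd1 : g ∣ q ^ 2 * (q ^ (2 * r) - 1) := Dvd.dvd.mul_left (hg1.trans h2r) _
      have hq2le : q ^ 2 ≤ q ^ (2 * r + 2) := Nat.pow_le_pow_right (by omega) (by omega)
      have heq : q ^ (2 * r + 2) - 1 = q ^ 2 * (q ^ (2 * r) - 1) + (q ^ 2 - 1) := by
        rw [hE2]; omega
      rw [heq] at hgn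
      exact (Nat.dvd_add_right hd1).mp hgn
    -- g ∣ q - 1
    obtain ⟨u, hu⟩ : ∃ u, r = 2 * u + 1 := ⟨r / 2, by omega⟩
    have h2u : q ^ 2 - 1 ∣ q ^ (2 * u) - 1 := by
      have h := Nat.sub_dvd_pow_sub_pow (q ^ 2) 1 u
      rw [one_pow, ← pow_mul] at h
      exact h
    have hE3 : q * q ^ (2 * u) = q ^ r := by
      rw [hu, ← pow_succ']
    have h2u1 : 1 ≤ q ^ (2 * u) := Nat.one_le_pow _ _ (by omega)
    have hE4 : q * (q ^ (2 * u) - 1) = q ^ r - q := by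
      rw [Nat.mul_sub, mul_one, hE3]
    have hqr_ge : q ≤ q ^ r := by
      calc q = q * 1 := (mul_one q).symm
      _ ≤ q * q ^ (2 * u) := Nat.mul_le_mul_left _ h2u1
      _ = q ^ r := hE3
    have hg3 : g ∣ q - 1 := by
      have hd1 : g ∣ q * (q ^ (2 * u) - 1) := Dvd.dvd.mul_left (hg2.trans h2u) _
      have heq : q ^ r - 1 = q * (q ^ (2 * u) - 1) + (q - 1) := by
        rw [hE4]; omega
      rw [heq] at hg1
      exact (Nat.dvd_add_right hd1).mp hg1
    -- (q-1) ∣ aN + 1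
    have hrge_m : 2 * r + 2 ≤ rep q (2 * r + 2) := rep_ge hq1 _
    have hrge_r : r ≤ rep q r := rep_ge hq1 _
    have hmod_m : (q - 1) ∣ rep q (2 * r + 2) - (2 * r + 2) := rep_mod hq1 _
    have hmod_r : (q - 1) ∣ rep q r - r := rep_mod hq1 _
    have hlin : Q1 * (2 * r + 2) + (r + 1) = (q - 1) * (r + 1) := by
      calc Q1 * (2 * r + 2) + (r + 1) = (2 * Q1) * (r + 1) + 1 * (r + 1) := by ring
      _ = (2 * Q1 + 1) * (r + 1) := by ring
      _ = (q - 1) * (r + 1) := by congr 1; omega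
    have hQsplit : Q1 * rep q (2 * r + 2)
        = Q1 * (rep q (2 * r + 2) - (2 * r + 2)) + Q1 * (2 * r + 2) := by
      rw [← Nat.mul_add]
      congr 1
      omega
    have hsplit : aN + 1 = Q1 * (rep q (2 * r + 2) - (2 * r + 2))
        + (rep q r - r) + (q - 1) * (r + 1) := by
      rw [haNdef, hQsplit]
      omega
    have hdvd_aN1 : (q - 1) ∣ aN + 1 := by
      rw [hsplit]
      exact dvd_add (dvd_add (Dvd.dvd.mul_left hmod_m _) hmod_r) (Dvd.dvd.mul_right dvd_rfl _)
    have : g ∣ 1 := by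
      have h1 : g ∣ aN + 1 := hg3.trans hdvd_aN1
      have := Nat.dvd_sub h1 hga
      simpa using this
    exact Nat.dvd_one.mp this
  · -- main part
    intro i hi1 hi2
    rw [hrr] at hi2
    set iN : ℕ := i.toNat with hiNdef
    have hiN : i = (iN : ℤ) := (Int.toNat_of_nonneg (by linarith)).symm
    have hiN1 : 1 ≤ iN := by omega
    have hiN2 : iN ≤ q ^ r := by
      rw [hiN] at hi2
      exact_mod_cast hi2
    -- the digit value c
    set c : ℕ := (Q1 * iN) % (q - 1) with hc
    have hclt : c ≤ q - 2 := by
      have h := Nat.mod_lt (Q1 * iN) (y := q - 1) (by omega)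
      omega
    -- (q-1) ∣ 2c + iN
    have hdvdc : (q - 1) ∣ 2 * c + iN := by
      have h1 : c ≡ Q1 * iN [MOD q - 1] := Nat.mod_modEq _ _
      have h2 : 2 * c + iN ≡ 2 * (Q1 * iN) + iN [MOD q - 1] :=
        Nat.ModEq.add_right iN (Nat.ModEq.mul_left 2 h1)
      have h3 : 2 * (Q1 * iN) + iN = (q - 1) * iN := by
        calc 2 * (Q1 * iN) + iN = (2 * Q1 + 1) * iN := by ring
        _ = (q - 1) * iN := by congr 1; omega
      have h4 : 2 * c + iN ≡ 0 [MOD q - 1] := by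
        rw [h3] at h2
        exact h2.trans (Nat.modEq_zero_iff_dvd.mpr (Dvd.dvd.mul_right dvd_rfl _))
      exact Nat.modEq_zero_iff_dvd.mp h4
    set A : ℕ := (2 * c + iN) / (q - 1) - 1 with hAdef
    have hA : (q - 1) * (A + 1) = 2 * c + iN := by
      have h1 : (q - 1) * ((2 * c + iN) / (q - 1)) = 2 * c + iN :=
        Nat.mul_div_cancel' hdvdc
      have h2 : 1 ≤ (2 * c + iN) / (q - 1) := by
        rcases Nat.eq_zero_or_pos ((2 * c + iN) / (q - 1)) with h | h
        · rw [h, Nat.mul_zero] at h1; omega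
        · omega
      have h3 : A + 1 = (2 * c + iN) / (q - 1) := by omega
      rw [h3, h1]
    have hAR : A ≤ rep q r := by
      by_contra hcon
      push_neg at hcon
      have h1 : (q - 1) * (rep q r + 2) ≤ (q - 1) * (A + 1) :=
        Nat.mul_le_mul_left _ (by omega)
      have h2 : (q - 1) * (rep q r + 2) = (q - 1) * rep q r + 2 * (q - 1) := by ring
      omega
    set W : ℕ := c * rep q r + A with hWdef
    have hWle : W + 1 ≤ q ^ r := by
      have h1 : c * rep q r ≤ (q - 2) * rep q r := Nat.mul_le_mul_right _ hclt
      have h2 : (q - 2) * rep q r + rep q r = (q - 1) * rep q r := by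
        calc (q - 2) * rep q r + rep q r = (q - 2 + 1) * rep q r := by ring
        _ = (q - 1) * rep q r := by congr 1; omega
      omega
    set D : ℕ := q ^ r - 1 - W with hDdef
    have hD : D + W + 1 = q ^ r := by omega
    -- the key identity
    set Vn : ℕ := q ^ (2 * r + 1) + c * rep q (2 * r + 2) + iN * rep q r with hVdef
    have hA' : ((q : ℤ) - 1) * ((A : ℤ) + 1) = 2 * (c : ℤ) + (iN : ℤ) := by
      have hcast := congrArg (fun x : ℕ => (x : ℤ)) hA
      push_cast at hcast
      have hcast2 : ((q - 1 : ℕ) : ℤ) = (q : ℤ) - 1 := by omega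
      rw [hcast2] at hcast
      linarith
    have hD' : (D : ℤ) + ((c : ℤ) * (rep q r : ℤ) + (A : ℤ)) + 1 = (q : ℤ) ^ r := by
      have hcast := congrArg (fun x : ℕ => (x : ℤ)) hD
      push_cast at hcast
      rw [hWdef] at hcast
      push_cast at hcast
      linarith
    have hkey : Vn = D + q ^ r * (W + q ^ r * (c + q * (c + 1))) := by
      have hZ : ((Vn : ℕ) : ℤ) = ((D + q ^ r * (W + q ^ r * (c + q * (c + 1))) : ℕ) : ℤ) := by
        rw [hVdef, hWdef]
        push_cast
        apply mul_left_cancel₀ hqz1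
        linear_combination (c : ℤ) * hrepm
          + ((iN : ℤ) + (c : ℤ) * (1 - (q : ℤ) ^ r)) * hrepr
          + (1 - (q : ℤ) ^ r) * hA' + (1 - (q : ℤ)) * hD'
      exact_mod_cast hZ
    -- weight computation
    have hWlt : W < q ^ r := by omega
    have hDlt : D < q ^ r := by omega
    have hF : qWeight q (c + q * (c + 1)) = 2 * c + 1 := by
      have h1 : c + q * (c + 1) = c + q ^ 1 * (c + 1) := by rw [pow_one]
      rw [h1, wt_split hq2 1 c (c + 1) (by rw [pow_one]; omega),
        wt_lt hq2 (by omega), wt_lt hq2 (by omega)]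
      omega
    have hcompl := wt_compl hq2 r W hWlt
    have hwtV : qWeight q Vn = r * (q - 1) + 2 * c + 1 := by
      rw [hkey, wt_split hq2 r D _ hDlt, wt_split hq2 r W _ hWlt, hF, hDdef]
      omega
    have hpar : qWeight q Vn % 2 = 0 := by
      have h1 : (q - 1) % 2 = 1 := by omega
      have h2 : r * (q - 1) % 2 = 1 := by
        rw [Nat.mul_mod, hrodd, h1]
      omega
    -- bounds on Vn
    have hV1 : 1 ≤ Vn := by
      have : 1 ≤ q ^ (2 * r + 1) := Nat.one_le_pow _ _ (by omega)
      rw [hVdef]; omega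
    have hFle : c + q * (c + 1) ≤ q ^ 2 - 2 := by
      have h1 : c + 1 ≤ q - 1 := by omega
      have h4 : q * (q - 1) + q = q * q := by
        have h5 : q - 1 + 1 = q := by omega
        calc q * (q - 1) + q = q * ((q - 1) + 1) := by ring
        _ = q * q := by rw [h5]
      have h2 : q * (c + 1) ≤ q * (q - 1) := Nat.mul_le_mul_left _ h1
      have h6 : c + q * (c + 1) + 2 ≤ q ^ 2 := by
        have h7 : q ^ 2 = q * q := by ring
        calc c + q * (c + 1) + 2 ≤ (q - 2) + q * (q - 1) + 2 :=
              add_le_add (add_le_add hclt h2) le_rfl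
        _ = q * (q - 1) + ((q - 2) + 2) := by ring
        _ = q * (q - 1) + q := by congr 1; omega
        _ = q * q := h4
        _ = q ^ 2 := h7.symm
      omega
    have hEsum : q ^ r * ((q ^ r - 1) + q ^ r * (q ^ 2 - 2)) + q ^ (2 * r) + q ^ r
        = q ^ (2 * r + 2) := by
      obtain ⟨x, hx⟩ : ∃ x, x + 1 = q ^ r := ⟨q ^ r - 1, by omega⟩
      have hq21 : 4 ≤ q ^ 2 := le_trans hq4 (Nat.le_self_pow (by omega) q)
      obtain ⟨y, hy⟩ : ∃ y, y + 2 = q ^ 2 := ⟨q ^ 2 - 2, by omega⟩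
      rw [show q ^ r - 1 = x by omega, show q ^ 2 - 2 = y by omega]
      have e1 : q ^ (2 * r) = q ^ r * q ^ r := by rw [← pow_add]; ring_nf
      have e2 : q ^ (2 * r + 2) = q ^ r * q ^ r * q ^ 2 := by rw [← pow_add, ← pow_add]; ring_nf
      rw [e1, e2, ← hx, ← hy]
      ring
    have hstep : q ^ r * (W + q ^ r * (c + q * (c + 1)))
        ≤ q ^ r * ((q ^ r - 1) + q ^ r * (q ^ 2 - 2)) := by
      apply Nat.mul_le_mul_left
      exact Nat.add_le_add (by omega) (Nat.mul_le_mul_left _ hFle)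
    have h2r1 : 1 ≤ q ^ (2 * r) := Nat.one_le_pow _ _ (by omega)
    have hV2 : Vn ≤ q ^ (2 * r + 2) - 2 := by
      rw [hkey]
      omega
    -- congruence
    set k : ℕ := (Q1 * iN) / (q - 1) with hk
    have hkc : (q - 1) * k + c = Q1 * iN := Nat.div_add_mod _ _
    have hkc' : ((q : ℤ) - 1) * (k : ℤ) + (c : ℤ) = (Q1 : ℤ) * (iN : ℤ) := by
      have hcast := congrArg (fun x : ℕ => (x : ℤ)) hkc
      push_cast at hcast
      have hcast2 : ((q - 1 : ℕ) : ℤ) = (q : ℤ) - 1 := by omega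
      rw [hcast2] at hcast
      linarith
    have hnz : (n : ℤ) = (q : ℤ) ^ (2 * r + 2) - 1 := by
      have h1 : ((q ^ (2 * r + 2) - 1 : ℕ) : ℤ) = ((q ^ (2 * r + 2) : ℕ) : ℤ) - 1 := by
        have : 1 ≤ q ^ (2 * r + 2) := Nat.one_le_pow _ _ (by omega)
        omega
      rw [hn, h1]
      push_cast
      ring
    have hcong : b + a * i = (Vn : ℤ) + (n : ℤ) * (k : ℤ) := by
      rw [hb, haN, hiN, hVdef, show 2 * r + 2 - 1 = 2 * r + 1 by omega, haNdef]
      push_cast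
      rw [hnz]
      linear_combination (-(rep q (2 * r + 2) : ℤ)) * hkc' + (k : ℤ) * hrepm
    have hVn_lt : (Vn : ℤ) < (n : ℤ) := by
      have h2 : (2 : ℕ) ≤ q ^ (2 * r + 2) := by omega
      have : Vn < n := by omega
      exact_mod_cast this
    have hmod : (b + a * i) % (n : ℤ) = (Vn : ℤ) := by
      rw [hcong, Int.add_mul_emod_self_left]
      exact Int.emod_eq_of_lt (by positivity) hVn_lt
    rw [hmod, Int.toNat_natCast]
    simp only [Tset, Finset.mem_filter, Finset.mem_Icc]
    exact ⟨⟨hV1, hV2⟩, hpar⟩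
end

section
/- Let s ≥ 2 be an integer, q = 2^s, m an integer with m ≡ 0 (mod 4) and m ≥ 4, and n = q^m − 1. Let a = (q^m − 1)/(q − 1) − 2·((q^{(m+2)/2} − 1)/(q − 1)). Then gcd(a, n) = 1, and for every integer i with 1 ≤ i ≤ q^{(m−2)/2}, the residue (a·i) mod n belongs to T_{(q,m;1)}. -/
namespace St9

def repu (q : ℕ) : ℕ → ℕ
  | 0 => 0
  | e+1 => q * repu q e + 1

lemma repu_cast (q : ℕ) (e : ℕ) : ((q:ℤ) - 1) * (repu q e : ℤ) = (q:ℤ)^e - 1 := by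
  induction e with
  | zero => simp [repu]
  | succ e ih =>
    rw [repu]
    push_cast
    linear_combination (q:ℤ) * ih

lemma repu_mul (q : ℕ) (hq : 1 ≤ q) (e : ℕ) : (q-1) * repu q e + 1 = q^e := by
  induction e with
  | zero => simp [repu]
  | succ e ih =>
    obtain ⟨q', rfl⟩ : ∃ q', q = q' + 1 := ⟨q - 1, by omega⟩
    rw [repu, pow_succ] at *
    simp only [Nat.add_sub_cancel] at *
    rw [← ih]; ring

lemma repu_odd (q : ℕ) (hq : q % 2 = 0) (e : ℕ) (he : 1 ≤ e) : repu q e % 2 = 1 := by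
  obtain ⟨e', rfl⟩ : ∃ e', e = e' + 1 := ⟨e - 1, by omega⟩
  rw [repu]
  have : 2 ∣ q * repu q e' := Dvd.dvd.mul_right (by omega) _
  omega

lemma repu_succ' (q : ℕ) (e : ℕ) : repu q (e+1) = repu q e + q^e := by
  induction e with
  | zero => simp [repu]
  | succ e ih =>
    show q * repu q (e+1) + 1 = repu q (e+1) + q^(e+1)
    nth_rewrite 1 [ih]
    show q * (repu q e + q^e) + 1 = (q * repu q e + 1) + q^(e+1)
    rw [pow_succ]; ring

lemma repu_mono (q : ℕ) {e f : ℕ} (h : e ≤ f) : repu q e ≤ repu q f := by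
  induction h with
  | refl => exact le_rfl
  | step h ih =>
    rw [repu_succ']
    omega

lemma repu_dvd (q : ℕ) (e : ℕ) : ((q:ℤ) - 1) ∣ ((repu q e : ℤ) - e) := by
  induction e with
  | zero => simp [repu]
  | succ e ih =>
    rw [repu]
    push_cast
    have : ((q:ℤ) * (repu q e : ℤ) + 1 - (e + 1) : ℤ)
        = ((q:ℤ) - 1) * repu q e + ((repu q e : ℤ) - e) := by ring
    rw [this]
    exact dvd_add (Dvd.intro _ rfl) ih

lemma wt_base (q : ℕ) (hq : 2 ≤ q) (A d : ℕ) (hd : d < q) :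
    qWeight q (q * A + d) = qWeight q A + d := by
  rcases Nat.eq_zero_or_pos (q*A+d) with h|h
  · have hA : A = 0 := by
      rcases Nat.mul_eq_zero.mp (show q * A = 0 by omega) with h'|h' <;> omega
    have hd0 : d = 0 := by omega
    subst hA; subst hd0
    simp [qWeight]
  · unfold qWeight
    rw [Nat.digits_def' (by omega : 1 < q) h]
    have h1 : (q * A + d) % q = d := by
      rw [Nat.mul_add_mod]; exact Nat.mod_eq_of_lt hd
    have h2 : (q * A + d) / q = A := by
      rw [Nat.mul_add_div (by omega), Nat.div_eq_of_lt hd]; omega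
    rw [h1, h2, List.sum_cons]; omega

lemma wt_zero (q : ℕ) : qWeight q 0 = 0 := by simp [qWeight]

lemma wt_single (q : ℕ) (hq : 2 ≤ q) (B : ℕ) (hB : B < q) : qWeight q B = B := by
  have := wt_base q hq 0 B hB
  simpa [wt_zero] using this

lemma wt_split (q : ℕ) (hq : 2 ≤ q) (e : ℕ) : ∀ A L, L < q ^ e →
    qWeight q (q ^ e * A + L) = qWeight q A + qWeight q L := by
  induction e with
  | zero =>
    intro A L hL
    rw [pow_zero] at hL
    have : L = 0 := by omega
    subst this
    simp [qWeight]
  | succ e ih =>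
    intro A L hL
    obtain ⟨L1, L0, hL', hL0⟩ : ∃ L1 L0, L = q * L1 + L0 ∧ L0 < q :=
      ⟨L / q, L % q, (Nat.div_add_mod L q).symm, Nat.mod_lt _ (by omega)⟩
    have hL1 : L1 < q ^ e := by
      have h2 : q * L1 < q * q ^ e := by
        calc q * L1 ≤ L := by omega
        _ < q ^ (e+1) := hL
        _ = q * q ^ e := by rw [pow_succ]; ring
      exact Nat.lt_of_mul_lt_mul_left h2
    have key : q ^ (e+1) * A + L = q * (q ^ e * A + L1) + L0 := by
      rw [hL', pow_succ]; ring
    rw [key, wt_base q hq _ _ hL0, ih A L1 hL1, hL', wt_base q hq _ _ hL0]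
    omega

lemma wt_compl (q : ℕ) (hq : 2 ≤ q) (e : ℕ) : ∀ x, x < q ^ e →
    qWeight q (q ^ e - 1 - x) + qWeight q x = e * (q - 1) := by
  induction e with
  | zero =>
    intro x hx
    rw [pow_zero] at hx ⊢
    have : x = 0 := by omega
    subst this
    simp [qWeight]
  | succ e ih =>
    intro x hx
    obtain ⟨x1, x0, hx', hx0⟩ : ∃ x1 x0, x = q * x1 + x0 ∧ x0 < q :=
      ⟨x / q, x % q, (Nat.div_add_mod x q).symm, Nat.mod_lt _ (by omega)⟩
    have hx1 : x1 < q ^ e := by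
      have h2 : q * x1 < q * q ^ e := by
        calc q * x1 ≤ x := by omega
        _ < q ^ (e+1) := hx
        _ = q * q ^ e := by rw [pow_succ]; ring
      exact Nat.lt_of_mul_lt_mul_left h2
    have hqe : 1 ≤ q ^ e := Nat.one_le_pow _ _ (by omega)
    have hpow : q ^ (e+1) = q * q ^ e := by rw [pow_succ]; ring
    have h1 : q * (q ^ e - 1 - x1) = q * q ^ e - q - q * x1 := by
      rw [Nat.mul_sub, Nat.mul_sub]; omega
    have h2 : q * x1 + q ≤ q * q ^ e := by
      have := Nat.mul_le_mul_left q (show x1 + 1 ≤ q ^ e by omega)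
      rw [Nat.mul_add, Nat.mul_one] at this
      omega
    have key : q ^ (e+1) - 1 - x = q * (q ^ e - 1 - x1) + (q - 1 - x0) := by
      omega
    have hih := ih x1 hx1
    rw [key, wt_base q hq _ _ (by omega), hx', wt_base q hq _ _ hx0, add_mul, one_mul]
    omega

lemma wt_pred_odd (q : ℕ) (hq : 2 ≤ q) (hq2 : q % 2 = 0) (z : ℕ) (hz : z % 2 = 1) :
    qWeight q z = qWeight q (z - 1) + 1 := by
  obtain ⟨z1, d, hz', hd⟩ : ∃ z1 d, z = q * z1 + d ∧ d < q :=
    ⟨z / q, z % q, (Nat.div_add_mod z q).symm, Nat.mod_lt _ (by omega)⟩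
  have h2 : 2 ∣ q * z1 := Dvd.dvd.mul_right (by omega) _
  have hd2 : d % 2 = 1 := by omega
  have h1 : z - 1 = q * z1 + (d - 1) := by omega
  rw [h1, hz', wt_base q hq _ _ hd, wt_base q hq _ _ (by omega)]
  omega

end St9

set_option maxHeartbeats 2000000 in
open St9 in
theorem stmt9 (s q m n : ℕ) (hs : 2 ≤ s) (hq : q = 2 ^ s)
    (hm : 4 ≤ m) (hmod4 : m % 4 = 0) (hn : n = q ^ m - 1)
    (a : ℤ) (ha : a = ((q : ℤ) ^ m - 1) / ((q : ℤ) - 1) -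
      2 * (((q : ℤ) ^ ((m + 2) / 2) - 1) / ((q : ℤ) - 1))) :
    Int.gcd a (n : ℤ) = 1 ∧
      ∀ i : ℤ, 1 ≤ i → i ≤ (q : ℤ) ^ ((m - 2) / 2) →
        ((a * i) % (n : ℤ)).toNat ∈ Tset q m 1 := by
  have hq2 : 2 ∣ q := hq ▸ dvd_pow_self 2 (by omega)
  have hq4 : 4 ≤ q := by
    rw [hq]
    calc (4:ℕ) = 2 ^ 2 := rfl
    _ ≤ 2 ^ s := Nat.pow_le_pow_right (by norm_num) hs
  set t : ℕ := m / 2 - 1 with ht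
  have hmt : m = t + 2 + t := by omega
  have htodd : t % 2 = 1 := by omega
  have ht1 : 1 ≤ t := by omega
  have hq1z : ((q:ℤ) - 1) ≠ 0 := by
    have : (4:ℤ) ≤ (q:ℤ) := by exact_mod_cast hq4
    omega
  -- value of a
  have hm2 : (m + 2) / 2 = t + 2 := by omega
  have hm2' : (m - 2) / 2 = t := by omega
  have haval : a = (repu q m : ℤ) - 2 * repu q (t+2) := by
    rw [ha, hm2, ← repu_cast q m, ← repu_cast q (t+2),
      Int.mul_ediv_cancel_left _ hq1z, Int.mul_ediv_cancel_left _ hq1z]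
  have hA2le : 2 * repu q (t+2) ≤ repu q m := by
    have h1 : repu q (t+3) ≤ repu q m := repu_mono q (by omega)
    have h2 : repu q (t+3) = q * repu q (t+2) + 1 := rfl
    have h3 : 2 * repu q (t+2) ≤ q * repu q (t+2) := Nat.mul_le_mul_right _ (by omega)
    omega
  set A : ℕ := repu q m - 2 * repu q (t+2) with hA
  have haA : a = (A : ℤ) := by
    rw [haval, hA]
    push_cast [Nat.cast_sub hA2le]
    ring
  have hqm1 : 1 ≤ q ^ m := Nat.one_le_pow _ _ (by omega)
  have hqt2_1 : 1 ≤ q ^ (t+2) := Nat.one_le_pow _ _ (by omega)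
  have hn0 : 0 < n := by
    have : q ^ 1 ≤ q ^ m := Nat.pow_le_pow_right (by omega) (by omega)
    simp only [pow_one] at this
    omega
  have hnodd : n % 2 = 1 := by
    have : 2 ∣ q ^ m := dvd_pow hq2 (by omega)
    omega
  constructor
  · -- gcd part
    rw [haA, Int.gcd_natCast_natCast]
    set g : ℕ := Nat.gcd A n with hg
    have hgA : g ∣ A := Nat.gcd_dvd_left _ _
    have hgn : g ∣ n := Nat.gcd_dvd_right _ _
    have hgodd : ¬ (2 ∣ g) := by
      intro h2
      have := h2.trans hgn
      omega
    have hgne : g ≠ 0 := by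
      intro h0
      rw [h0] at hgn
      omega
    have hAz : (A : ℤ) = (repu q (t+2+t) : ℤ) - 2 * repu q (t+2) := by
      rw [← hmt, ← haA, haval]
    have hkey : (q-1) * A + 2*(q^(t+2) - 1) = n := by
      rw [hn, hmt]
      zify [hqt2_1, Nat.one_le_pow (t+2+t) q (by omega : 0 < q), show 1 ≤ q by omega]
      linear_combination repu_cast q (t+2+t) - 2 * repu_cast q (t+2) + ((q:ℤ)-1) * hAz
    have h2d : g ∣ 2*(q^(t+2) - 1) := by
      have hd1 : g ∣ (q-1) * A := Dvd.dvd.mul_left hgA _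
      have : n - (q-1)*A = 2*(q^(t+2)-1) := by omega
      rw [← this]
      exact Nat.dvd_sub hgn hd1
    have hgq : g ∣ q^(t+2) - 1 := by
      have hcop : Nat.Coprime g 2 :=
        ((Nat.Prime.coprime_iff_not_dvd Nat.prime_two).mpr hgodd).symm
      exact (Nat.Coprime.dvd_of_dvd_mul_left hcop h2d)
    haveI : NeZero g := ⟨hgne⟩
    have hzm : (q : ZMod g)^m = 1 := by
      have h0 : ((q^m - 1 : ℕ) : ZMod g) = 0 := by
        rw [ZMod.natCast_eq_zero_iff]
        exact hn ▸ hgn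
      push_cast [Nat.cast_sub hqm1] at h0
      linear_combination h0
    have hzt : (q : ZMod g)^(t+2) = 1 := by
      have h0 : ((q^(t+2) - 1 : ℕ) : ZMod g) = 0 := by
        rw [ZMod.natCast_eq_zero_iff]
        exact hgq
      push_cast [Nat.cast_sub hqt2_1] at h0
      linear_combination h0
    have hgcdm : Nat.gcd m (t+2) = 1 := by
      set d := Nat.gcd m (t+2) with hd
      have hd1 : d ∣ m := Nat.gcd_dvd_left _ _
      have hd2 : d ∣ t+2 := Nat.gcd_dvd_right _ _
      have hd3 : d ∣ 2*(t+2) := hd2.mul_left 2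
      have hd4 : d ∣ 2 := by
        have : 2*(t+2) - m = 2 := by omega
        rw [← this]
        exact Nat.dvd_sub hd3 hd1
      rcases (Nat.dvd_prime Nat.prime_two).mp hd4 with h|h
      · exact h
      · exfalso
        rw [h] at hd2
        omega
    have hq1 : (q : ZMod g) = 1 := by
      rw [← orderOf_eq_one_iff]
      have hdvd : orderOf (q : ZMod g) ∣ 1 :=
        hgcdm ▸ Nat.dvd_gcd (orderOf_dvd_of_pow_eq_one hzm) (orderOf_dvd_of_pow_eq_one hzt)
      exact Nat.dvd_one.mp hdvd
    have hgq1 : g ∣ q - 1 := by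
      rw [← ZMod.natCast_eq_zero_iff]
      push_cast [Nat.cast_sub (show 1 ≤ q by omega)]
      rw [hq1]
      ring
    have hq1A : (q - 1) ∣ A + 2 := by
      have hz : ((q:ℤ) - 1) ∣ ((A:ℤ) + 2) := by
        have h3 := repu_dvd q m
        have h2 := repu_dvd q (t+2)
        have : ((A:ℤ) + 2) = ((repu q m : ℤ) - m) - 2 * ((repu q (t+2) : ℤ) - (t+2)) := by
          rw [hA]
          push_cast [Nat.cast_sub hA2le]
          have : (m:ℤ) = 2*(t:ℤ) + 2 := by exact_mod_cast (by omega : m = 2*t+2)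
          rw [this]
          ring
        rw [this]
        exact dvd_sub h3 (h2.mul_left 2)
      have hcast : ((q - 1 : ℕ) : ℤ) = (q:ℤ) - 1 := by
        push_cast [Nat.cast_sub (show 1 ≤ q by omega)]; ring
      rw [← hcast] at hz
      exact_mod_cast hz
    have hg2 : g ∣ 2 := by
      have hgA2 : g ∣ A + 2 := hgq1.trans hq1A
      have : A + 2 - A = 2 := by omega
      rw [← this]
      exact Nat.dvd_sub hgA2 hgA
    rcases (Nat.dvd_prime Nat.prime_two).mp hg2 with h|h
    · exact h
    · exact absurd (h ▸ dvd_refl g) hgodd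
  · -- membership part
    intro i hi1 hi2
    rw [hm2'] at hi2
    have hij : i = ((i.toNat : ℕ) : ℤ) := (Int.toNat_of_nonneg (by omega)).symm
    obtain ⟨j, hijj⟩ : ∃ j : ℕ, i = (j:ℤ) := ⟨i.toNat, hij⟩
    have hj1 : 1 ≤ j := by
      have : (1:ℤ) ≤ (j:ℤ) := hijj ▸ hi1
      exact_mod_cast this
    have hj2 : j ≤ q ^ t := by
      have h2 : (j:ℤ) ≤ ((q^t : ℕ) : ℤ) := by
        push_cast
        exact hijj ▸ hi2
      exact_mod_cast h2
    obtain ⟨k, r, hjkr, hrlt⟩ : ∃ k r, j = (q-1)*k + r + 1 ∧ r < q-1 :=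
      ⟨(j-1)/(q-1), (j-1)%(q-1),
        by have := Nat.div_add_mod (j-1) (q-1); omega,
        Nat.mod_lt _ (by omega)⟩
    have hq2le : 2 ≤ q := by omega
    have hqt : (q-1) * repu q t + 1 = q ^ t := repu_mul q (by omega) t
    have hqt2 : (q-1) * repu q (t+2) + 1 = q ^ (t+2) := repu_mul q (by omega) (t+2)
    have hrt_odd : repu q t % 2 = 1 := repu_odd q (by omega) t ht1
    have hkle : k ≤ repu q t := by
      refine Nat.le_of_mul_le_mul_left ?_ (show 0 < q - 1 by omega)
      omega
    have hrep_le2 : repu q t ≤ repu q (t+2) := repu_mono q (by omega)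
    have hnz : (n:ℤ) = (q:ℤ)^(t+2+t) - 1 := by
      rw [hn, hmt]
      push_cast [Nat.one_le_pow (t+2+t) q (by omega : 0 < q)]
      ring
    have hpowm : q^(t+2) * q^t = q^m := by rw [hmt, pow_add q (t+2) t]
    have hqt4 : 4 ≤ q^t := le_trans hq4 (Nat.le_self_pow (by omega) q)
    have hrep22 : repu q (t+2) = repu q t + q^t + q^t * q := by
      rw [repu_succ', repu_succ', pow_succ]
    simp only [Tset, Finset.mem_filter, Finset.mem_Icc]
    by_cases hcase : 2*k+1 ≤ (r+1) * repu q t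
    · -- Case 1
      have hBle : r + 1 ≤ q - 1 := by omega
      have hmul1 : (r+1) * repu q t ≤ (q-1) * repu q t := Nat.mul_le_mul_right _ hBle
      have hmul2 : (r+1) * repu q (t+2) ≤ (q-1) * repu q (t+2) := Nat.mul_le_mul_right _ hBle
      have hxle2 : 2*k+1 ≤ (r+1) * repu q (t+2) :=
        le_trans hcase (Nat.mul_le_mul_left _ hrep_le2)
      have hxle2' : 2*k+1 ≤ (r+1) * (repu q t + q^t + q^t*q) :=
        le_trans hcase (Nat.mul_le_mul_left _ (by omega))
      have hDeq : (r+1) * repu q (t+2) - (2*k+1)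
          = q^t * (q*(r+1) + (r+1)) + ((r+1) * repu q t - (2*k+1)) := by
        rw [hrep22]
        zify [hcase, hxle2']
        ring
      have hHilt : (r+1) * repu q t - (2*k+1) < q^t := by omega
      have hDpos : 1 ≤ (r+1) * repu q (t+2) - (2*k+1) := by
        have h0 : 0 < q^t * (q*(r+1)+(r+1)) := Nat.mul_pos (Nat.pow_pos (by omega)) (by omega)
        omega
      have hDle : (r+1) * repu q (t+2) - (2*k+1) ≤ q^(t+2) - 1 := by omega
      have hsplit : (q-1-(r+1)) * repu q (t+2) + (r+1) * repu q (t+2)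
          = (q-1) * repu q (t+2) := by
        rw [← Nat.add_mul]
        congr 1
        omega
      have hLoD : ((q-1-(r+1)) * repu q (t+2) + (2*k+1))
          + ((r+1) * repu q (t+2) - (2*k+1)) = q^(t+2) - 1 := by omega
      have hLolt : (q-1-(r+1)) * repu q (t+2) + (2*k+1) < q^(t+2) := by omega
      have hylt : q^(t+2) * ((r+1) * repu q t - (2*k+1))
          + ((q-1-(r+1)) * repu q (t+2) + (2*k+1)) ≤ q^m - 2 := by
        have h1 : q^(t+2) * ((r+1) * repu q t - (2*k+1)) ≤ q^(t+2) * (q^t - 1) :=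
          Nat.mul_le_mul_left _ (by omega)
        have h2 : q^(t+2) * (q^t - 1) + q^(t+2) = q^(t+2) * q^t := by
          rw [← Nat.mul_succ]
          congr 1
          omega
        omega
      -- weight
      have hwy : qWeight q (q^(t+2) * ((r+1) * repu q t - (2*k+1))
          + ((q-1-(r+1)) * repu q (t+2) + (2*k+1)))
          = qWeight q ((r+1) * repu q t - (2*k+1))
            + qWeight q ((q-1-(r+1)) * repu q (t+2) + (2*k+1)) :=
        wt_split q hq2le (t+2) _ _ hLolt
      have hwLoD : qWeight q ((q-1-(r+1)) * repu q (t+2) + (2*k+1))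
          + qWeight q ((r+1) * repu q (t+2) - (2*k+1)) = (t+2)*(q-1) := by
        have h := wt_compl q hq2le (t+2) ((r+1) * repu q (t+2) - (2*k+1)) (by omega)
        have e : q^(t+2) - 1 - ((r+1) * repu q (t+2) - (2*k+1))
            = (q-1-(r+1)) * repu q (t+2) + (2*k+1) := by omega
        rw [e] at h
        exact h
      have hwD : qWeight q ((r+1) * repu q (t+2) - (2*k+1))
          = qWeight q (q*(r+1)+(r+1)) + qWeight q ((r+1) * repu q t - (2*k+1)) := by
        rw [hDeq]
        exact wt_split q hq2le t _ _ hHilt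
      have hwBB : qWeight q (q*(r+1)+(r+1)) = (r+1) + (r+1) := by
        rw [wt_base q hq2le _ _ (by omega), wt_single q hq2le _ (by omega)]
      have hoddt2 : ((t+2)*(q-1)) % 2 = 1 :=
        Nat.odd_iff.mp (Nat.odd_mul.mpr ⟨Nat.odd_iff.mpr (by omega), Nat.odd_iff.mpr (by omega)⟩)
      -- congruence
      have hjkr' : (j:ℤ) = ((q:ℤ)-1) * k + r + 1 := by
        zify [show 1 ≤ q by omega] at hjkr
        linarith [hjkr]
      have hiz : i = ((q:ℤ)-1) * k + (r+1) := by rw [hijj, hjkr']; push_cast; ring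
      have hyz : ((q^(t+2) * ((r+1) * repu q t - (2*k+1))
          + ((q-1-(r+1)) * repu q (t+2) + (2*k+1)) : ℕ) : ℤ)
          = (q:ℤ)^(t+2) * (((r:ℤ)+1) * repu q t - (2*k+1))
            + (((q:ℤ)-1-((r:ℤ)+1)) * repu q (t+2) + (2*(k:ℤ)+1)) := by
        push_cast [Nat.cast_sub hcase, Nat.cast_sub hBle, Nat.cast_sub (show 1 ≤ q by omega)]
        ring
      have hkey2 : a * i = ((q^(t+2) * ((r+1) * repu q t - (2*k+1))
          + ((q-1-(r+1)) * repu q (t+2) + (2*k+1)) : ℕ) : ℤ) + (k:ℤ) * (n:ℤ) := by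
        rw [hyz, haval, hiz, hnz, hmt]
        apply mul_left_cancel₀ hq1z
        linear_combination (((q:ℤ)-1)*(k:ℤ) + ((r:ℤ)+1)) * repu_cast q (t+2+t)
          + (-2*(((q:ℤ)-1)*(k:ℤ) + ((r:ℤ)+1)) - ((q:ℤ)-1-((r:ℤ)+1))) * repu_cast q (t+2)
          + (-(q:ℤ)^(t+2)*((r:ℤ)+1)) * repu_cast q t
      have hyn : (q^(t+2) * ((r+1) * repu q t - (2*k+1))
          + ((q-1-(r+1)) * repu q (t+2) + (2*k+1))) < n := by omega
      have hmod : (a * i) % (n:ℤ) = ((q^(t+2) * ((r+1) * repu q t - (2*k+1))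
          + ((q-1-(r+1)) * repu q (t+2) + (2*k+1)) : ℕ) : ℤ) := by
        rw [hkey2, Int.add_mul_emod_self_right]
        exact Int.emod_eq_of_lt (by positivity) (by exact_mod_cast hyn)
      rw [hmod, Int.toNat_natCast]
      refine ⟨⟨by omega, by omega⟩, ?_⟩
      omega
    · -- Case 2
      have hr0 : r = 0 := by
        by_contra hr0
        have hble : 2 * repu q t ≤ (r+1) * repu q t := Nat.mul_le_mul_right _ (by omega)
        have hkeq : k = repu q t := by omega
        rw [hkeq] at hjkr
        omega
      subst hr0
      have hzk : repu q t ≤ 2*k := by omega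
      have hz1 : 1 ≤ 2*k - repu q t := by omega
      have hzodd : (2*k - repu q t) % 2 = 1 := by omega
      have hzle : 2*k - repu q t ≤ repu q t := by omega
      have hreple : repu q t ≤ q^t - 2 := by
        have h3 : 3 * repu q t ≤ (q-1) * repu q t := Nat.mul_le_mul_right _ (by omega)
        omega
      have hq12 : q^(t+1) + q^t ≤ q^(t+2) := by
        have e1 : q^(t+1) = q^t * q := pow_succ q t
        have e2 : q^(t+2) = q^t * (q*q) := by
          rw [pow_succ, pow_succ, mul_assoc]
        have hqq : q + 1 ≤ q*q := by
          have h4 : 4*q ≤ q*q := Nat.mul_le_mul_right q hq4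
          omega
        have h := Nat.mul_le_mul_left (q^t) hqq
        rw [Nat.mul_add, Nat.mul_one] at h
        omega
      have hqt1le : q^t ≤ q^(t+1) := Nat.pow_le_pow_right (by omega) (by omega)
      have hwlt : q^(t+1) + (q^t - (2*k - repu q t)) ≤ q^(t+2) - 1 := by omega
      have hx'le : q^(t+2) * (2*k - repu q t) + (q^(t+1) + (q^t - (2*k - repu q t)))
          ≤ q^m - 2 := by
        have h1 : q^(t+2) * (2*k - repu q t) ≤ q^(t+2) * (q^t - 2) :=
          Nat.mul_le_mul_left _ (by omega)
        have h2 : q^(t+2) * (q^t - 2) + q^(t+2) * 2 = q^(t+2) * q^t := by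
          rw [← Nat.mul_add]
          congr 1
          omega
        omega
      have hx'pos : 1 ≤ q^(t+2) * (2*k - repu q t) + (q^(t+1) + (q^t - (2*k - repu q t))) := by
        have h := Nat.mul_le_mul_left (q^(t+2)) hz1
        omega
      -- weight
      have hwyx : qWeight q (q^m - 1 - (q^(t+2) * (2*k - repu q t)
            + (q^(t+1) + (q^t - (2*k - repu q t)))))
          + qWeight q (q^(t+2) * (2*k - repu q t) + (q^(t+1) + (q^t - (2*k - repu q t))))
          = m*(q-1) :=
        wt_compl q hq2le m _ (by omega)
      have hwx : qWeight q (q^(t+2) * (2*k - repu q t) + (q^(t+1) + (q^t - (2*k - repu q t))))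
          = qWeight q (2*k - repu q t) + qWeight q (q^(t+1) + (q^t - (2*k - repu q t))) :=
        wt_split q hq2le (t+2) _ _ (by omega)
      have hwW : qWeight q (q^(t+1) + (q^t - (2*k - repu q t)))
          = 1 + qWeight q (q^t - (2*k - repu q t)) := by
        have h := wt_split q hq2le (t+1) 1 (q^t - (2*k - repu q t)) (by omega)
        rw [mul_one] at h
        rw [h, wt_single q hq2le 1 (by omega)]
      have hwc : qWeight q (q^t - (2*k - repu q t)) + qWeight q ((2*k - repu q t) - 1)
          = t*(q-1) := by
        have h := wt_compl q hq2le t ((2*k - repu q t) - 1) (by omega)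
        have e : q^t - 1 - ((2*k - repu q t) - 1) = q^t - (2*k - repu q t) := by omega
        rw [e] at h
        exact h
      have hwz : qWeight q (2*k - repu q t) = qWeight q ((2*k - repu q t) - 1) + 1 :=
        wt_pred_odd q hq2le (by omega) _ hzodd
      have hoddt : (t*(q-1)) % 2 = 1 :=
        Nat.odd_iff.mp (Nat.odd_mul.mpr ⟨Nat.odd_iff.mpr (by omega), Nat.odd_iff.mpr (by omega)⟩)
      have hevenm : (m*(q-1)) % 2 = 0 := by
        have h2 : 2 ∣ m := by omega
        have := h2.mul_right (q-1)
        omega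
      -- congruence
      have hjkr' : (j:ℤ) = ((q:ℤ)-1) * k + 1 := by
        zify [show 1 ≤ q by omega] at hjkr
        linarith [hjkr]
      have hiz : i = ((q:ℤ)-1) * k + 1 := by rw [hijj, hjkr']
      have hk1 : 1 ≤ k := by omega
      have hzz : (((2*k - repu q t : ℕ)) : ℤ) = 2*(k:ℤ) - repu q t := by
        push_cast [Nat.cast_sub hzk]
        ring
      have hyz : ((q^m - 1 - (q^(t+2) * (2*k - repu q t)
            + (q^(t+1) + (q^t - (2*k - repu q t)))) : ℕ) : ℤ)
          = (q:ℤ)^(t+2+t) - 1 - ((q:ℤ)^(t+2) * ((2*k - repu q t : ℕ) : ℤ)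
            + ((q:ℤ)^(t+1) + ((q:ℤ)^t - ((2*k - repu q t : ℕ) : ℤ)))) := by
        rw [hmt]
        push_cast [Nat.cast_sub (show q^(t+2) * (2*k - repu q t)
            + (q^(t+1) + (q^t - (2*k - repu q t))) ≤ q^(t+2+t) - 1 by rw [← hmt]; omega),
          Nat.cast_sub hzk, Nat.cast_sub (show 2*k - repu q t ≤ q^t by omega),
          Nat.one_le_pow (t+2+t) q (by omega : 0 < q)]
        ring
      have hkey2 : a * i = ((q^m - 1 - (q^(t+2) * (2*k - repu q t)
            + (q^(t+1) + (q^t - (2*k - repu q t)))) : ℕ) : ℤ) + ((k:ℤ)-1) * (n:ℤ) := by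
        rw [hyz, haval, hiz, hnz, hmt]
        apply mul_left_cancel₀ hq1z
        linear_combination (((q:ℤ)-1)*(k:ℤ) + 1) * repu_cast q (t+2+t)
          + (-2*(((q:ℤ)-1)*(k:ℤ) + 1)) * repu_cast q (t+2)
          + (-((q:ℤ)^(t+2)-1)) * repu_cast q t
          + (((q:ℤ)-1)*((q:ℤ)^(t+2)-1)) * hzz
      have hyge : 1 ≤ q^m - 1 - (q^(t+2) * (2*k - repu q t)
            + (q^(t+1) + (q^t - (2*k - repu q t)))) := by omega
      have hyn : q^m - 1 - (q^(t+2) * (2*k - repu q t)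
            + (q^(t+1) + (q^t - (2*k - repu q t)))) < n := by omega
      have hmod : (a * i) % (n:ℤ) = ((q^m - 1 - (q^(t+2) * (2*k - repu q t)
            + (q^(t+1) + (q^t - (2*k - repu q t)))) : ℕ) : ℤ) := by
        rw [hkey2, Int.add_mul_emod_self_right]
        exact Int.emod_eq_of_lt (by positivity) (by exact_mod_cast hyn)
      rw [hmod, Int.toNat_natCast]
      refine ⟨⟨by omega, by omega⟩, ?_⟩
      omega
end
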